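/- arXiv:1101.2116 — 7 statements merged into one kernel-verified Lean document; each statement's English description precedes it below -/
import Mathlib

section
/- Let (K,ν) be a real closed valued field and L = K(x₁,…,xₙ). For every point b ∈ Kⁿ there exists an OVF-valuation on L which is near b. -/
universe u v w

open MvPolynomial

/-- A (linear) field ordering, given by its cone of non-negative elements.
This is equivalent to a linear order making the field an ordered field. -/
structure FieldOrdering (L : Type*) [Field L] where
  P : Set L
  add_mem : ∀ x ∈ P, ∀ y ∈ P, x + y ∈ P
  mul_mem : ∀ x ∈ P, ∀ y ∈ P, x * y ∈ P
  square_mem : ∀ x : L, x * x ∈ P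
  neg_one_not_mem : (-1 : L) ∉ P
  total : ∀ x : L, x ∈ P ∨ -x ∈ P

/-- `x >_L 0` for a field ordering. -/
def FieldOrdering.Pos {L : Type*} [Field L] (O : FieldOrdering L) (x : L) : Prop :=
  x ∈ O.P ∧ x ≠ 0

/-- An ordering on a valued field is compatible with the (multiplicative) valuation
if `0 < x < y` implies `w x ≤ w y` (i.e. the additive valuation of `x` is at least
that of `y`); equivalently, the valuation ring is convex. -/
def FieldOrdering.IsCompatible {L : Type*} [Field L] {Γ : Type*}
    [LinearOrderedCommGroupWithZero Γ] (O : FieldOrdering L) (w : Valuation L Γ) : Prop :=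
  ∀ x y : L, O.Pos x → O.Pos (y - x) → w x ≤ w y

/-- A field `K` is real closed: every nonnegative element is a square and every
polynomial of odd degree has a root. -/
def IsRealClosedField (K : Type*) [Field K] [LinearOrder K] [IsStrictOrderedRing K] : Prop :=
  (∀ x : K, 0 ≤ x → ∃ y : K, y * y = x) ∧
    ∀ p : Polynomial K, Odd p.natDegree → ∃ x : K, p.IsRoot x

/-- `(K, ≤, ν)` is a real closed valued field: `K` is real closed and the
valuation ring of `ν` is convex (`0 < x < y → ν x ≤ ν y` multiplicatively). -/
def IsRCVF {K : Type*} [Field K] [LinearOrder K] [IsStrictOrderedRing K] {Γ₀ : Type*}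
    [LinearOrderedCommGroupWithZero Γ₀] (ν : Valuation K Γ₀) : Prop :=
  IsRealClosedField K ∧ ∀ x y : K, 0 < x → x < y → ν x ≤ ν y

/-- The field of rational functions in `n` variables over `K`. -/
abbrev RatFuncField (K : Type u) [Field K] (n : ℕ) : Type u :=
  FractionRing (MvPolynomial (Fin n) K)

/-- `f = q/r` with `r b ≠ 0` and `v = q b / r b`; i.e. `f` is defined at `b` with value `v`. -/
def HasEvalAt {K : Type u} [Field K] {n : ℕ} (f : RatFuncField K n) (b : Fin n → K) (v : K) :
    Prop :=
  ∃ q r : MvPolynomial (Fin n) K, eval b r ≠ 0 ∧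
    f = algebraMap (MvPolynomial (Fin n) K) (RatFuncField K n) q /
      algebraMap (MvPolynomial (Fin n) K) (RatFuncField K n) r ∧
    v = eval b q / eval b r

/-- `f` is defined at `b`. -/
def IsDefinedAt {K : Type u} [Field K] {n : ℕ} (f : RatFuncField K n) (b : Fin n → K) : Prop :=
  ∃ v : K, HasEvalAt f b v

/-- A valuation `w` on an extension field extends `ν` if the valuation ring of `w`
intersected with `K` is the valuation ring of `ν`. -/
def ValExtends {K L : Type*} [Field K] [Field L] [Algebra K L] {Γ₀ Γ : Type*}
    [LinearOrderedCommGroupWithZero Γ₀] [LinearOrderedCommGroupWithZero Γ]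
    (ν : Valuation K Γ₀) (w : Valuation L Γ) : Prop :=
  ∀ a : K, w (algebraMap K L a) ≤ 1 ↔ ν a ≤ 1

/-- An OVF-valuation on `L` (over `(K,ν)`): a valuation extending `ν` admitting a
compatible field ordering. -/
def IsOVFValuation {K L : Type*} [Field K] [Field L] [Algebra K L] {Γ₀ Γ : Type*}
    [LinearOrderedCommGroupWithZero Γ₀] [LinearOrderedCommGroupWithZero Γ]
    (ν : Valuation K Γ₀) (w : Valuation L Γ) : Prop :=
  ValExtends ν w ∧ ∃ O : FieldOrdering L, O.IsCompatible w

/-- A valuation on `K(x₁,…,xₙ)` is near `b ∈ Kⁿ` if every rational function defined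
at `b` and vanishing at `b` has valuation above every element of the value group of `K`
(multiplicatively: `w f < w a` for every nonzero `a ∈ K`). -/
def IsNear {K : Type u} [Field K] {n : ℕ} {Γ : Type*} [LinearOrderedCommGroupWithZero Γ]
    (w : Valuation (RatFuncField K n) Γ) (b : Fin n → K) : Prop :=
  ∀ f : RatFuncField K n, HasEvalAt f b 0 →
    ∀ a : K, a ≠ 0 → w f < w (algebraMap K (RatFuncField K n) a)

/-- `f` is OVF-integral at `b`: every OVF-valuation near `b` takes `f` into its
valuation ring. -/
def IsOVFIntegralAt {K : Type u} [Field K] {Γ₀ : Type v} [LinearOrderedCommGroupWithZero Γ₀]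
    {n : ℕ} (ν : Valuation K Γ₀) (f : RatFuncField K n) (b : Fin n → K) : Prop :=
  ∀ (Γ : Type w) (_ : LinearOrderedCommGroupWithZero Γ)
    (wb : Valuation (RatFuncField K n) Γ),
    IsOVFValuation ν wb → IsNear wb b → wb f ≤ 1

/-- `Cone P`: the smallest subset of `L` containing `P` and all squares of nonzero
elements which is closed under addition and multiplication. -/
inductive InCone {L : Type*} [Field L] (P : Set L) : L → Prop
  | mem : ∀ x ∈ P, InCone P x
  | sq : ∀ x : L, x ≠ 0 → InCone P (x * x)
  | add : ∀ x y : L, InCone P x → InCone P y → InCone P (x + y)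
  | mul : ∀ x y : L, InCone P x → InCone P y → InCone P (x * y)

/-- The open semi-algebraic set `S_p̄ = {b | p_i(b) > 0 for all i}`. -/
def SetSP {K : Type u} [Field K] [LinearOrder K] [IsStrictOrderedRing K] {n m : ℕ}
    (p : Fin m → MvPolynomial (Fin n) K) : Set (Fin n → K) :=
  {b | ∀ i, 0 < eval b (p i)}

/-- The set `I_p̄ = { 1/(1+f) : f ∈ Cone({p₁,…,p_m}) }` inside `K(x₁,…,xₙ)`. -/
def SetIP {K : Type u} [Field K] {n m : ℕ} (p : Fin m → MvPolynomial (Fin n) K) :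
    Set (RatFuncField K n) :=
  {g | ∃ f : RatFuncField K n,
    InCone (Set.range fun i => algebraMap (MvPolynomial (Fin n) K) (RatFuncField K n) (p i)) f ∧
    g = (1 + f)⁻¹}

/-- The `O_ν`-subalgebra of `K(x₁,…,xₙ)` generated by a set `I` (as a subring
generated by `I` together with the image of `O_ν`). -/
noncomputable def OAlgebraGen {K : Type u} [Field K] {Γ₀ : Type v} [LinearOrderedCommGroupWithZero Γ₀]
    (ν : Valuation K Γ₀) {n : ℕ} (I : Set (RatFuncField K n)) : Subring (RatFuncField K n) :=
  Subring.closure ((algebraMap K (RatFuncField K n) '' {a : K | ν a ≤ 1}) ∪ I)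



/-- The multiplicative set `T = {1 + m·a : m ∈ M_ν, a ∈ A}` used for the integral radical. -/
def SetT {K : Type u} [Field K] {Γ₀ : Type v} [LinearOrderedCommGroupWithZero Γ₀]
    (ν : Valuation K Γ₀) {n : ℕ} (A : Subring (RatFuncField K n)) :
    Set (RatFuncField K n) :=
  {t | ∃ m : K, ν m < 1 ∧ ∃ a ∈ A, t = 1 + algebraMap K (RatFuncField K n) m * a}

/-- The localization `A_T` of `A` at `T`, realized inside `L` as the subring generated
by `A` together with the inverses of the elements of `T`. -/
noncomputable def LocAT {K : Type u} [Field K] {n : ℕ}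
    (A : Subring (RatFuncField K n)) (T : Set (RatFuncField K n)) :
    Subring (RatFuncField K n) :=
  Subring.closure ((A : Set (RatFuncField K n)) ∪ ((fun t => t⁻¹) '' T))

/-- The integral radical of `A`: the integral closure in `L` of the localization `A_T`. -/
noncomputable def IntegralRadical {K : Type u} [Field K] {Γ₀ : Type v}
    [LinearOrderedCommGroupWithZero Γ₀] (ν : Valuation K Γ₀) {n : ℕ}
    (A : Subring (RatFuncField K n)) : Set (RatFuncField K n) :=
  (integralClosure (LocAT A (SetT ν A)) (RatFuncField K n) :
    Subalgebra (LocAT A (SetT ν A)) (RatFuncField K n))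

/-- A semi-section of a valued field `(L, μ)` (with `μ` surjective, so that the nonzero
elements of `Γ` form the value group): a map `s : Γ → L` with `μ (s γ) = γ` such that
`s (γ₁γ₂) / (s γ₁ · s γ₂)` is always a square. -/
def IsSemiSection {L : Type*} [Field L] {Γ : Type*} [LinearOrderedCommGroupWithZero Γ]
    (μ : Valuation L Γ) (s : Γ → L) : Prop :=
  (∀ γ : Γ, γ ≠ 0 → μ (s γ) = γ) ∧
    ∀ γ₁ γ₂ : Γ, γ₁ ≠ 0 → γ₂ ≠ 0 →
      ∃ c : L, c ≠ 0 ∧ s (γ₁ * γ₂) = s γ₁ * s γ₂ * (c * c)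

/-- `y ∈ O_μ` and its residue is `>_ℓ 0` for the given ordering of the residue field. -/
def ResPos {L : Type*} [Field L] {Γ : Type*} [LinearOrderedCommGroupWithZero Γ]
    (μ : Valuation L Γ)
    (Oℓ : FieldOrdering (IsLocalRing.ResidueField μ.valuationSubring)) (y : L) : Prop :=
  ∃ u : μ.valuationSubring, (u : L) = y ∧
    Oℓ.Pos (IsLocalRing.residue (μ.valuationSubring) u)

/-- An ordering `OL` of `L` induces the ordering `Oℓ` of the residue field:
positive units of the valuation ring have positive residue. -/
def OrderingInduces {L : Type*} [Field L] {Γ : Type*} [LinearOrderedCommGroupWithZero Γ]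
    (μ : Valuation L Γ) (OL : FieldOrdering L)
    (Oℓ : FieldOrdering (IsLocalRing.ResidueField μ.valuationSubring)) : Prop :=
  ∀ u : μ.valuationSubring, μ (u : L) = 1 → OL.Pos (u : L) →
    Oℓ.Pos (IsLocalRing.residue (μ.valuationSubring) u)

/-- The set `S_{p̄,ḡ}`: points where all `p_i` are positive and all `g_j` are defined
with value in the valuation ring. -/
def SetSPG {K : Type u} [Field K] [LinearOrder K] [IsStrictOrderedRing K] {Γ₀ : Type v}
    [LinearOrderedCommGroupWithZero Γ₀] (ν : Valuation K Γ₀) {n m l : ℕ}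
    (p : Fin m → MvPolynomial (Fin n) K) (g : Fin l → RatFuncField K n) :
    Set (Fin n → K) :=
  {b | (∀ i, 0 < eval b (p i)) ∧ ∀ j, ∃ v : K, HasEvalAt (g j) b v ∧ ν v ≤ 1}

namespace OVFNear

noncomputable instance (priority := 5000) lexPiInt (n : ℕ) :
    LinearOrder (Lex (Fin n → ℤ)) :=
  Pi.Lex.linearOrder

noncomputable instance (priority := 5000) lexPiIntLO (n : ℕ) : LinearOrder (Lex (Fin n → ℤ)) :=
  lexPiInt n

noncomputable instance (priority := 5000) lexPiIntPO (n : ℕ) : PartialOrder (Lex (Fin n → ℤ)) :=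
  (lexPiIntLO n).toPartialOrder

noncomputable instance (priority := 5000) lexPiIntPre (n : ℕ) : Preorder (Lex (Fin n → ℤ)) :=
  (lexPiIntPO n).toPreorder

noncomputable instance (priority := 5000) lexPiIntLE (n : ℕ) : LE (Lex (Fin n → ℤ)) :=
  (lexPiIntPre n).toLE

noncomputable instance (priority := 5000) lexPiIntLT (n : ℕ) : LT (Lex (Fin n → ℤ)) :=
  (lexPiIntPre n).toLT

noncomputable instance (priority := 5000) lexPiIntMin (n : ℕ) : Min (Lex (Fin n → ℤ)) :=
  ⟨(lexPiIntLO n).min⟩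

noncomputable instance (priority := 5000) lexPiIntMax (n : ℕ) : Max (Lex (Fin n → ℤ)) :=
  ⟨(lexPiIntLO n).max⟩

variable {n : ℕ}

/-- embedding of exponents into the lex ordered group. -/
def Emb (d : Fin n →₀ ℕ) : Lex (Fin n → ℤ) := toLex fun i => (d i : ℤ)

lemma Emb_add (a b : Fin n →₀ ℕ) : Emb (a + b) = Emb a + Emb b := by
  refine congrArg toLex (funext fun i => ?_)
  show ((a + b) i : ℤ) = (a i : ℤ) + (b i : ℤ)
  push_cast [Finsupp.add_apply]; ring

lemma Emb_inj : Function.Injective (Emb (n := n)) := by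
  intro a b h
  ext i
  have := congrFun (toLex.injective h) i
  exact_mod_cast this

lemma Emb_zero : Emb (0 : Fin n →₀ ℕ) = 0 := by
  rfl

lemma Emb_nonneg (d : Fin n →₀ ℕ) : 0 ≤ Emb d := by
  have h : (fun _ => (0:ℤ) : Fin n → ℤ) ≤ fun i => (d i : ℤ) := fun i => by positivity
  exact Pi.toLex_monotone h

lemma Emb_pos (d : Fin n →₀ ℕ) (hd : d ≠ 0) : 0 < Emb d :=
  (Emb_nonneg d).lt_of_ne fun h => hd (Emb_inj (by rw [Emb_zero, ← h]))

end OVFNear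

namespace OVFNear

variable {K : Type u} [Field K] {n : ℕ}

open Classical in
/-- trailing degree (min of `Emb` over the support), `0` for `p = 0`. -/
noncomputable def mdeg (p : MvPolynomial (Fin n) K) : Lex (Fin n → ℤ) :=
  if h : p = 0 then 0
  else (p.support.image Emb).min' (Finset.Nonempty.image (support_nonempty.mpr h) _)

/-- trailing monomial exponent. -/
noncomputable def ldm (p : MvPolynomial (Fin n) K) : Fin n →₀ ℕ :=
  Function.invFun Emb (mdeg p)

/-- trailing coefficient. -/
noncomputable def lc (p : MvPolynomial (Fin n) K) : K := coeff (ldm p) p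

variable {p q : MvPolynomial (Fin n) K}

lemma mdeg_mem (hp : p ≠ 0) : mdeg p ∈ p.support.image Emb := by
  classical
  rw [mdeg, dif_neg hp]
  exact Finset.min'_mem _ _

lemma Emb_ldm (hp : p ≠ 0) : Emb (ldm p) = mdeg p := by
  obtain ⟨d, _, hd⟩ := Finset.mem_image.mp (mdeg_mem hp)
  exact Function.invFun_eq ⟨d, hd⟩

lemma ldm_mem (hp : p ≠ 0) : ldm p ∈ p.support := by
  obtain ⟨d, hd, hEd⟩ := Finset.mem_image.mp (mdeg_mem hp)
  have : ldm p = d := Emb_inj ((Emb_ldm hp).trans hEd.symm)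
  rwa [this]

lemma lc_ne_zero (hp : p ≠ 0) : lc p ≠ 0 := by
  have := ldm_mem hp
  rwa [mem_support_iff] at this

lemma mdeg_le {d : Fin n →₀ ℕ} (hd : d ∈ p.support) : mdeg p ≤ Emb d := by
  classical
  have hp : p ≠ 0 := fun h => by simp [h] at hd
  rw [mdeg, dif_neg hp]
  exact Finset.min'_le _ _ (Finset.mem_image_of_mem _ hd)

lemma coeff_eq_zero_of_lt {d : Fin n →₀ ℕ} (h : Emb d < mdeg p) : coeff d p = 0 := by
  by_contra h'
  exact absurd (mdeg_le (mem_support_iff.mpr h')) (not_le.mpr h)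

lemma mdeg_eq_of {d : Fin n →₀ ℕ} (hd : coeff d p ≠ 0)
    (hmin : ∀ d' : Fin n →₀ ℕ, Emb d' < Emb d → coeff d' p = 0) :
    mdeg p = Emb d ∧ ldm p = d := by
  have hp : p ≠ 0 := fun h => hd (by simp [h])
  have h1 : mdeg p ≤ Emb d := mdeg_le (mem_support_iff.mpr hd)
  have h2 : Emb d ≤ mdeg p := by
    by_contra h'
    push_neg at h'
    rw [← Emb_ldm hp] at h'
    exact lc_ne_zero hp (hmin _ h')
  have heq : mdeg p = Emb d := le_antisymm h1 h2
  exact ⟨heq, Emb_inj ((Emb_ldm hp).trans heq)⟩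

lemma mdeg_nonneg (hp : p ≠ 0) : 0 ≤ mdeg p := by
  rw [← Emb_ldm hp]; exact Emb_nonneg _

lemma mul_facts (hp : p ≠ 0) (hq : q ≠ 0) :
    mdeg (p * q) = mdeg p + mdeg q ∧ ldm (p * q) = ldm p + ldm q ∧
      lc (p * q) = lc p * lc q := by
  classical
  have key1 : coeff (ldm p + ldm q) (p * q) = lc p * lc q := by
    rw [coeff_mul]
    refine Finset.sum_eq_single_of_mem (ldm p, ldm q) (Finset.HasAntidiagonal.mem_antidiagonal.mpr rfl) ?_
    rintro ⟨u, v⟩ huv hne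
    rw [Finset.HasAntidiagonal.mem_antidiagonal] at huv
    by_contra h0
    have hu : coeff u p ≠ 0 := fun h => h0 (by simp [h])
    have hv : coeff v q ≠ 0 := fun h => h0 (by simp [h])
    have h1 : mdeg p ≤ Emb u := mdeg_le (mem_support_iff.mpr hu)
    have h2 : mdeg q ≤ Emb v := mdeg_le (mem_support_iff.mpr hv)
    have hsum : Emb u + Emb v = mdeg p + mdeg q := by
      rw [← Emb_add, huv, Emb_add, Emb_ldm hp, Emb_ldm hq]
    have hu' : Emb u = mdeg p := by
      by_contra h'
      have : mdeg p + mdeg q < Emb u + Emb v :=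
        add_lt_add_of_lt_of_le (lt_of_le_of_ne h1 (Ne.symm h')) h2
      exact absurd hsum (ne_of_gt this)
    have hv' : Emb v = mdeg q := by
      have := hsum
      rw [hu'] at this
      exact add_left_cancel this
    have e1 : u = ldm p := Emb_inj (hu'.trans (Emb_ldm hp).symm)
    have e2 : v = ldm q := Emb_inj (hv'.trans (Emb_ldm hq).symm)
    rw [e1, e2] at hne
    exact hne rfl
  have hkey1 : coeff (ldm p + ldm q) (p * q) ≠ 0 := by
    rw [key1]; exact mul_ne_zero (lc_ne_zero hp) (lc_ne_zero hq)
  have key2 : ∀ d' : Fin n →₀ ℕ, Emb d' < Emb (ldm p + ldm q) → coeff d' (p * q) = 0 := by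
    intro d' hd'
    rw [Emb_add, Emb_ldm hp, Emb_ldm hq] at hd'
    rw [coeff_mul]
    refine Finset.sum_eq_zero ?_
    rintro ⟨u, v⟩ huv
    rw [Finset.HasAntidiagonal.mem_antidiagonal] at huv
    by_contra h0
    have hu : coeff u p ≠ 0 := fun h => h0 (by simp [h])
    have hv : coeff v q ≠ 0 := fun h => h0 (by simp [h])
    have h1 : mdeg p ≤ Emb u := mdeg_le (mem_support_iff.mpr hu)
    have h2 : mdeg q ≤ Emb v := mdeg_le (mem_support_iff.mpr hv)
    have : mdeg p + mdeg q ≤ Emb d' := by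
      rw [← huv, Emb_add]
      exact add_le_add h1 h2
    exact absurd hd' (not_lt.mpr this)
  obtain ⟨hm, hl⟩ := mdeg_eq_of hkey1 key2
  refine ⟨by rw [hm, Emb_add, Emb_ldm hp, Emb_ldm hq], hl, ?_⟩
  rw [lc, hl, key1]

lemma mdeg_mul (hp : p ≠ 0) (hq : q ≠ 0) : mdeg (p * q) = mdeg p + mdeg q :=
  (mul_facts hp hq).1

lemma lc_mul (hp : p ≠ 0) (hq : q ≠ 0) : lc (p * q) = lc p * lc q :=
  (mul_facts hp hq).2.2

lemma neg_facts (hp : p ≠ 0) : mdeg (-p) = mdeg p ∧ lc (-p) = - lc p := by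
  have h1 : coeff (ldm p) (-p) ≠ 0 := by
    rw [coeff_neg]
    exact neg_ne_zero.mpr (lc_ne_zero hp)
  have h2 : ∀ d' : Fin n →₀ ℕ, Emb d' < Emb (ldm p) → coeff d' (-p) = 0 := by
    intro d' hd'
    rw [Emb_ldm hp] at hd'
    rw [coeff_neg, coeff_eq_zero_of_lt hd', neg_zero]
  obtain ⟨hm, hl⟩ := mdeg_eq_of h1 h2
  rw [Emb_ldm hp] at hm
  refine ⟨hm, ?_⟩
  rw [lc, hl, coeff_neg]
  rfl

lemma C_facts {a : K} (ha : a ≠ 0) :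
    mdeg (C a : MvPolynomial (Fin n) K) = 0 ∧ lc (C a : MvPolynomial (Fin n) K) = a := by
  have h1 : coeff (0 : Fin n →₀ ℕ) (C a) ≠ 0 := by simpa using ha
  have h2 : ∀ d' : Fin n →₀ ℕ, Emb d' < Emb 0 → coeff d' (C a : MvPolynomial (Fin n) K) = 0 := by
    intro d' hd'
    rw [Emb_zero] at hd'
    exact absurd hd' (not_lt.mpr (Emb_nonneg d'))
  obtain ⟨hm, hl⟩ := mdeg_eq_of h1 h2
  rw [Emb_zero] at hm
  refine ⟨hm, ?_⟩
  rw [lc, hl]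
  simp

lemma add_left_facts (h : mdeg p < mdeg q) (hp : p ≠ 0) (hq : q ≠ 0) :
    p + q ≠ 0 ∧ mdeg (p + q) = mdeg p ∧ lc (p + q) = lc p := by
  have hcq : coeff (ldm p) q = 0 := coeff_eq_zero_of_lt (by rw [Emb_ldm hp]; exact h)
  have h1 : coeff (ldm p) (p + q) ≠ 0 := by
    rw [coeff_add, hcq, add_zero]
    exact lc_ne_zero hp
  have h2 : ∀ d' : Fin n →₀ ℕ, Emb d' < Emb (ldm p) → coeff d' (p + q) = 0 := by
    intro d' hd'
    rw [Emb_ldm hp] at hd'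
    rw [coeff_add, coeff_eq_zero_of_lt hd', coeff_eq_zero_of_lt (hd'.trans h), add_zero]
  obtain ⟨hm, hl⟩ := mdeg_eq_of h1 h2
  rw [Emb_ldm hp] at hm
  have hne : p + q ≠ 0 := fun h0 => h1 (by rw [h0, coeff_zero])
  refine ⟨hne, hm, ?_⟩
  rw [lc, hl, coeff_add, hcq, add_zero]
  rfl

lemma add_same_facts (h : mdeg p = mdeg q) (hp : p ≠ 0) (hq : q ≠ 0)
    (hsum : lc p + lc q ≠ 0) :
    p + q ≠ 0 ∧ mdeg (p + q) = mdeg p ∧ lc (p + q) = lc p + lc q := by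
  have hld : ldm q = ldm p := Emb_inj (by rw [Emb_ldm hp, Emb_ldm hq, h])
  have h1 : coeff (ldm p) (p + q) ≠ 0 := by
    rw [coeff_add]
    have : coeff (ldm p) q = lc q := by rw [← hld]; rfl
    rw [this]
    exact hsum
  have h2 : ∀ d' : Fin n →₀ ℕ, Emb d' < Emb (ldm p) → coeff d' (p + q) = 0 := by
    intro d' hd'
    rw [Emb_ldm hp] at hd'
    rw [coeff_add, coeff_eq_zero_of_lt hd', coeff_eq_zero_of_lt (h ▸ hd'), add_zero]
  obtain ⟨hm, hl⟩ := mdeg_eq_of h1 h2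
  rw [Emb_ldm hp] at hm
  have hne : p + q ≠ 0 := fun h0 => h1 (by rw [h0, coeff_zero])
  refine ⟨hne, hm, ?_⟩
  rw [lc, hl, coeff_add]
  congr 1
  rw [← hld]
  rfl

lemma min_le_mdeg_add (hr : p + q ≠ 0) (hp : p ≠ 0) (hq : q ≠ 0) :
    min (mdeg p) (mdeg q) ≤ mdeg (p + q) := by
  classical
  have hmem := ldm_mem hr
  have := MvPolynomial.support_add (p := p) (q := q) hmem
  rw [← Emb_ldm hr]
  rcases Finset.mem_union.mp this with h | h
  · exact min_le_of_left_le (mdeg_le h)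
  · exact min_le_of_right_le (mdeg_le h)

end OVFNear

namespace OVFNear

variable {K : Type u} [Field K] {Γ' : Type v} [LinearOrderedCommGroupWithZero Γ'] {n : ℕ}

/-- The value group for the valuation near a point. -/
abbrev GammaV (Γ' : Type v) [LinearOrderedCommGroupWithZero Γ'] (n : ℕ) : Type v :=
  WithZero (Multiplicative (Lex (Fin n → ℤ)) ×ₗ Γ'ˣ)

variable (μ : Valuation K Γ')

open Classical in
/-- the valuation function on polynomials : trailing monomial and `μ` of trailing coeff. -/
noncomputable def vfun (p : MvPolynomial (Fin n) K) : GammaV Γ' n :=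
  if h : p = 0 then 0
  else (↑(toLex (Multiplicative.ofAdd (-mdeg p),
      Units.mk0 (μ (lc p)) ((Valuation.ne_zero_iff μ).mpr (lc_ne_zero h)))) : GammaV Γ' n)

variable {p q : MvPolynomial (Fin n) K}

lemma vfun_eq (hp : p ≠ 0) :
    vfun μ p = (↑(toLex (Multiplicative.ofAdd (-mdeg p),
      Units.mk0 (μ (lc p)) ((Valuation.ne_zero_iff μ).mpr (lc_ne_zero hp)))) : GammaV Γ' n) :=
  dif_neg hp

lemma vfun_zero : vfun μ (0 : MvPolynomial (Fin n) K) = 0 := dif_pos rfl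

lemma vfun_ne_zero (hp : p ≠ 0) : vfun μ p ≠ 0 := by
  rw [vfun_eq μ hp]; exact WithZero.coe_ne_zero

lemma vfun_congr (hp : p ≠ 0) (hq : q ≠ 0) (hm : mdeg p = mdeg q)
    (hl : μ (lc p) = μ (lc q)) : vfun μ p = vfun μ q := by
  rw [vfun_eq μ hp, vfun_eq μ hq, WithZero.coe_inj]
  refine congrArg toLex (Prod.ext ?_ (Units.ext ?_))
  · rw [hm]
  · simpa using hl

lemma vfun_le_vfun_iff (hp : p ≠ 0) (hq : q ≠ 0) :
    vfun μ p ≤ vfun μ q ↔ (mdeg q < mdeg p ∨ (mdeg q = mdeg p ∧ μ (lc p) ≤ μ (lc q))) := by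
  rw [vfun_eq μ hp, vfun_eq μ hq, WithZero.coe_le_coe, Prod.Lex.le_iff]
  constructor
  · rintro (h | ⟨h1, h2⟩)
    · left
      have := Multiplicative.ofAdd_lt.mp h
      exact neg_lt_neg_iff.mp this
    · right
      refine ⟨(neg_inj.mp (Multiplicative.ofAdd.injective h1)).symm, ?_⟩
      rw [← Units.val_le_val] at h2
      simpa using h2
  · rintro (h | ⟨h1, h2⟩)
    · exact Or.inl (Multiplicative.ofAdd_lt.mpr (neg_lt_neg h))
    · refine Or.inr ⟨by rw [h1]; rfl, ?_⟩
      rw [← Units.val_le_val]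
      simpa using h2

lemma vfun_lt_vfun_iff (hp : p ≠ 0) (hq : q ≠ 0) :
    vfun μ p < vfun μ q ↔ (mdeg q < mdeg p ∨ (mdeg q = mdeg p ∧ μ (lc p) < μ (lc q))) := by
  rw [vfun_eq μ hp, vfun_eq μ hq, WithZero.coe_lt_coe, Prod.Lex.lt_iff]
  constructor
  · rintro (h | ⟨h1, h2⟩)
    · exact Or.inl (neg_lt_neg_iff.mp (Multiplicative.ofAdd_lt.mp h))
    · refine Or.inr ⟨(neg_inj.mp (Multiplicative.ofAdd.injective h1)).symm, ?_⟩
      rw [← Units.val_lt_val] at h2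
      simpa using h2
  · rintro (h | ⟨h1, h2⟩)
    · exact Or.inl (Multiplicative.ofAdd_lt.mpr (neg_lt_neg h))
    · refine Or.inr ⟨by rw [h1]; rfl, ?_⟩
      rw [← Units.val_lt_val]
      simpa using h2

/-- The valuation on the polynomial ring. -/
noncomputable def polyVal : Valuation (MvPolynomial (Fin n) K) (GammaV Γ' n) where
  toFun := vfun μ
  map_zero' := vfun_zero μ
  map_one' := by
    show vfun μ 1 = 1
    rw [vfun_eq μ one_ne_zero]
    have hC := C_facts (n := n) (one_ne_zero (α := K))
    rw [← WithZero.coe_one, WithZero.coe_inj]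
    refine (congrArg toLex (Prod.ext ?_ (Units.ext ?_))).trans rfl
    · show Multiplicative.ofAdd (-mdeg (1 : MvPolynomial (Fin n) K)) = 1
      rw [show (1 : MvPolynomial (Fin n) K) = C 1 from (map_one C).symm, hC.1, neg_zero]
      rfl
    · show μ (lc (1 : MvPolynomial (Fin n) K)) = 1
      rw [show (1 : MvPolynomial (Fin n) K) = C 1 from (map_one C).symm, hC.2, map_one]
  map_mul' p q := by
    show vfun μ (p * q) = vfun μ p * vfun μ q
    by_cases hp : p = 0
    · rw [hp, zero_mul, vfun_zero, zero_mul]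
    by_cases hq : q = 0
    · rw [hq, mul_zero, vfun_zero, mul_zero]
    obtain ⟨hm, _, hl⟩ := mul_facts hp hq
    rw [vfun_eq μ (mul_ne_zero hp hq), vfun_eq μ hp, vfun_eq μ hq, ← WithZero.coe_mul,
      WithZero.coe_inj]
    refine congrArg toLex (Prod.ext ?_ (Units.ext ?_))
    · show Multiplicative.ofAdd (-mdeg (p * q)) =
        Multiplicative.ofAdd (-mdeg p) * Multiplicative.ofAdd (-mdeg q)
      rw [← ofAdd_add, hm, neg_add]
    · show μ (lc (p * q)) = μ (lc p) * μ (lc q)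
      rw [hl, map_mul]
  map_add_le_max' p q := by
    show vfun μ (p + q) ≤ max (vfun μ p) (vfun μ q)
    by_cases hr : p + q = 0
    · rw [hr, vfun_zero]; exact zero_le'
    by_cases hp : p = 0
    · rw [hp, zero_add]; exact le_max_right _ _
    by_cases hq : q = 0
    · rw [hq, add_zero]; exact le_max_left _ _
    rcases lt_trichotomy (mdeg p) (mdeg q) with h | h | h
    · obtain ⟨hne, hm, hl⟩ := add_left_facts h hp hq
      exact le_max_of_le_left (le_of_eq (vfun_congr μ hne hp hm (by rw [hl])))
    · by_cases hsum : lc p + lc q = 0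
      · -- cancellation: mdeg (p+q) > mdeg p strictly
        have hmin : mdeg p ≤ mdeg (p + q) := by
          have := min_le_mdeg_add hr hp hq
          rwa [h, min_self, ← h] at this
        have hstrict : mdeg p < mdeg (p + q) := by
          rcases lt_or_eq_of_le hmin with h' | h'
          · exact h'
          exfalso
          have hldq : ldm q = ldm p := Emb_inj (by rw [Emb_ldm hp, Emb_ldm hq, h])
          have hldr : ldm (p + q) = ldm p := Emb_inj (by rw [Emb_ldm hr, Emb_ldm hp, ← h'])
          have : lc (p + q) = lc p + lc q := by
            rw [lc, hldr, coeff_add]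
            congr 1
            rw [← hldq]
            rfl
          rw [hsum] at this
          exact lc_ne_zero hr this
        refine le_max_of_le_left (le_of_lt ?_)
        rw [vfun_lt_vfun_iff μ hr hp]
        exact Or.inl hstrict
      · obtain ⟨hne, hm, hl⟩ := add_same_facts h hp hq hsum
        have hμ : μ (lc (p + q)) ≤ max (μ (lc p)) (μ (lc q)) := by
          rw [hl]; exact μ.map_add _ _
        rcases max_cases (μ (lc p)) (μ (lc q)) with ⟨hmx, _⟩ | ⟨hmx, _⟩
        · refine le_max_of_le_left ?_
          rw [vfun_le_vfun_iff μ hne hp]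
          exact Or.inr ⟨hm.symm, by rw [← hmx]; exact hμ⟩
        · refine le_max_of_le_right ?_
          rw [vfun_le_vfun_iff μ hne hq]
          exact Or.inr ⟨by rw [hm, h], by rw [← hmx]; exact hμ⟩
    · have h' : mdeg q < mdeg p := h
      obtain ⟨hne, hm, hl⟩ := add_left_facts h' hq hp
      rw [add_comm q p] at hne hm hl
      exact le_max_of_le_right (le_of_eq (vfun_congr μ hne hq hm (by rw [hl])))

lemma polyVal_apply (p : MvPolynomial (Fin n) K) : polyVal μ p = vfun μ p := rfl

end OVFNear

namespace OVFNear

section Translate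

variable {K : Type u} [Field K] {n : ℕ} (b : Fin n → K)

/-- translation by `b` : `p(X) ↦ p(X + b)`. -/
noncomputable def tau : MvPolynomial (Fin n) K →+* MvPolynomial (Fin n) K :=
  ((aeval fun i => X i + C (b i)) : MvPolynomial (Fin n) K →ₐ[K] MvPolynomial (Fin n) K).toRingHom

lemma tau_C (a : K) : tau b (C a) = C a := by simp [tau]

lemma eval_zero_tau (p : MvPolynomial (Fin n) K) :
    eval (0 : Fin n → K) (tau b p) = eval b p := by
  have : (eval (0 : Fin n → K)).comp (tau b) = eval b := by
    apply MvPolynomial.ringHom_ext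
    · intro a; simp [tau]
    · intro i; simp [tau]
  exact congrFun (congrArg DFunLike.coe this) p

lemma tau_inj : Function.Injective (tau b) := by
  have h : (((aeval fun i => X i - C (b i)) :
      MvPolynomial (Fin n) K →ₐ[K] MvPolynomial (Fin n) K).toRingHom).comp (tau b) =
      RingHom.id _ := by
    apply MvPolynomial.ringHom_ext
    · intro a; simp [tau]
    · intro i; simp [tau]
  intro x y hxy
  have hx := congrFun (congrArg DFunLike.coe h) x
  have hy := congrFun (congrArg DFunLike.coe h) y
  simp only [RingHom.coe_comp, Function.comp_apply, RingHom.id_apply] at hx hy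
  rw [← hx, ← hy, hxy]

lemma tau_ne_zero {p : MvPolynomial (Fin n) K} (hp : p ≠ 0) : tau b p ≠ 0 := by
  intro h
  exact hp (tau_inj b (h.trans (map_zero (tau b)).symm))

lemma mdeg_tau_pos {p : MvPolynomial (Fin n) K} (hp : p ≠ 0) (h0 : eval b p = 0) :
    0 < mdeg (tau b p) := by
  have hP : tau b p ≠ 0 := tau_ne_zero b hp
  have hc0 : coeff 0 (tau b p) = 0 := by
    have := eval_zero_tau b p
    rw [eval_zero] at this
    rw [← constantCoeff_eq] at *
    rw [this, h0]
  have hld : ldm (tau b p) ≠ 0 := by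
    intro h
    exact lc_ne_zero hP (by rw [lc, h, hc0])
  rw [← Emb_ldm hP]
  exact Emb_pos _ hld

lemma mdeg_tau_zero {p : MvPolynomial (Fin n) K} (h0 : eval b p ≠ 0) :
    mdeg (tau b p) = 0 ∧ p ≠ 0 := by
  have hp : p ≠ 0 := by rintro rfl; simp at h0
  have hP : tau b p ≠ 0 := tau_ne_zero b hp
  have hc0 : coeff 0 (tau b p) ≠ 0 := by
    have := eval_zero_tau b p
    rw [eval_zero] at this
    rw [← constantCoeff_eq] at *
    rw [this]; exact h0
  refine ⟨le_antisymm ?_ (mdeg_nonneg hP), hp⟩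
  have := mdeg_le (mem_support_iff.mpr hc0)
  rwa [Emb_zero] at this

end Translate

section FullVal

variable {K : Type u} [Field K] {Γ' : Type v} [LinearOrderedCommGroupWithZero Γ'] {n : ℕ}
variable (μ : Valuation K Γ') (b : Fin n → K)

local notation "L" => FractionRing (MvPolynomial (Fin n) K)

lemma tau_supp_le :
    nonZeroDivisors (MvPolynomial (Fin n) K) ≤ (((polyVal μ).comap (tau b)).supp).primeCompl := by
  intro x hx
  have hx0 : x ≠ 0 := mem_nonZeroDivisors_iff_ne_zero.mp hx
  show x ∉ ((polyVal μ).comap (tau b)).supp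
  rw [Valuation.mem_supp_iff]
  show vfun μ (tau b x) ≠ 0
  exact vfun_ne_zero μ (tau_ne_zero b hx0)

/-- The valuation on the rational function field near `b`. -/
noncomputable def fullVal : Valuation L (GammaV Γ' n) :=
  ((polyVal μ).comap (tau b)).extendToLocalization (tau_supp_le μ b) L

lemma fullVal_algebraMap (p : MvPolynomial (Fin n) K) :
    fullVal μ b (algebraMap (MvPolynomial (Fin n) K) L p) = vfun μ (tau b p) :=
  Valuation.extendToLocalization_apply_map_apply _ _ _ _

end FullVal

end OVFNear

namespace OVFNear

section Ordered

variable {K : Type u} [Field K] [LinearOrder K] [IsStrictOrderedRing K] {Γ' : Type v} [LinearOrderedCommGroupWithZero Γ']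
variable {n : ℕ} {μ : Valuation K Γ'} {p q : MvPolynomial (Fin n) K}

/-- sum of two "positive" polynomials is positive, and its value is at least that
of each summand (using convexity of the valuation ring). -/
lemma pos_add_facts (conv : ∀ x y : K, 0 < x → x < y → μ x ≤ μ y)
    (hp : p ≠ 0) (hq : q ≠ 0) (h1 : 0 < lc p) (h2 : 0 < lc q) :
    p + q ≠ 0 ∧ 0 < lc (p + q) ∧ vfun μ p ≤ vfun μ (p + q) := by
  rcases lt_trichotomy (mdeg p) (mdeg q) with h | h | h
  · obtain ⟨hne, hm, hl⟩ := add_left_facts h hp hq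
    exact ⟨hne, by rw [hl]; exact h1,
      le_of_eq (vfun_congr μ hp hne hm.symm (by rw [hl]))⟩
  · have hsum : lc p + lc q ≠ 0 := ne_of_gt (add_pos h1 h2)
    obtain ⟨hne, hm, hl⟩ := add_same_facts h hp hq hsum
    refine ⟨hne, by rw [hl]; exact add_pos h1 h2, ?_⟩
    rw [vfun_le_vfun_iff μ hp hne]
    refine Or.inr ⟨hm, ?_⟩
    rw [hl]
    exact conv _ _ h1 (lt_add_of_pos_right _ h2)
  · obtain ⟨hne, hm, hl⟩ := add_left_facts h hq hp
    rw [add_comm q p] at hne hm hl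
    refine ⟨hne, by rw [hl]; exact h2, ?_⟩
    rw [vfun_le_vfun_iff μ hp hne]
    exact Or.inl (by rw [hm]; exact h)

/-- well-definedness of the sign of a quotient representation. -/
lemma sign_well_defined {A B C D : K} (hB : B ≠ 0) (hD : D ≠ 0) (hE : A * D = C * B) :
    (0 < A * B ↔ 0 < C * D) := by
  have hB2 : 0 < B * B := mul_self_pos.mpr hB
  have hD2 : 0 < D * D := mul_self_pos.mpr hD
  have key : A * B * (D * D) = C * D * (B * B) := by linear_combination (B * D) * hE
  constructor
  · intro h; nlinarith [mul_pos h hD2]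
  · intro h; nlinarith [mul_pos h hB2]

end Ordered

end OVFNear

namespace OVFNear

section Aux2

variable {K : Type u} [Field K] {Γ' : Type v} [LinearOrderedCommGroupWithZero Γ']
variable {n : ℕ} (μ : Valuation K Γ') (b : Fin n → K)

local notation "L" => FractionRing (MvPolynomial (Fin n) K)

lemma toLex_div' {α : Type*} {β : Type*} [CommGroup α] [CommGroup β] (x y : α × β) :
    (toLex x) / (toLex y) = toLex (x / y) := rfl

lemma C_ne_zero {a : K} (ha : a ≠ 0) : (C a : MvPolynomial (Fin n) K) ≠ 0 :=
  fun h => ha (by simpa using congrArg (coeff 0) h)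

lemma vfun_C {a : K} (ha : a ≠ 0) :
    vfun μ (C a : MvPolynomial (Fin n) K) =
      (↑(toLex ((1 : Multiplicative (Lex (Fin n → ℤ))),
        Units.mk0 (μ a) ((Valuation.ne_zero_iff μ).mpr ha))) : GammaV Γ' n) := by
  obtain ⟨hm, hl⟩ := C_facts (n := n) ha
  rw [vfun_eq μ (C_ne_zero ha), WithZero.coe_inj]
  refine congrArg toLex (Prod.ext ?_ (Units.ext ?_))
  · show Multiplicative.ofAdd (-mdeg (C a : MvPolynomial (Fin n) K)) = 1
    rw [hm, neg_zero]
    rfl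
  · show μ (lc (C a : MvPolynomial (Fin n) K)) = μ a
    rw [hl]

lemma fullVal_algebraMapK {a : K} (ha : a ≠ 0) :
    fullVal μ b (algebraMap K L a) =
      (↑(toLex ((1 : Multiplicative (Lex (Fin n → ℤ))),
        Units.mk0 (μ a) ((Valuation.ne_zero_iff μ).mpr ha))) : GammaV Γ' n) := by
  rw [IsScalarTower.algebraMap_apply K (MvPolynomial (Fin n) K) L,
    fullVal_algebraMap, MvPolynomial.algebraMap_eq, tau_C, vfun_C μ ha]

lemma fullVal_div_repr {f : L} {q r : MvPolynomial (Fin n) K} (hq : q ≠ 0) (hr : r ≠ 0)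
    (hf : f = algebraMap (MvPolynomial (Fin n) K) L q / algebraMap (MvPolynomial (Fin n) K) L r) :
    fullVal μ b f = vfun μ (tau b q) / vfun μ (tau b r) := by
  have halgr : (algebraMap (MvPolynomial (Fin n) K) L r) ≠ 0 :=
    (map_ne_zero_iff _ (IsFractionRing.injective (MvPolynomial (Fin n) K) L)).mpr hr
  have hmul : f * algebraMap (MvPolynomial (Fin n) K) L r
      = algebraMap (MvPolynomial (Fin n) K) L q := by
    rw [hf, div_mul_cancel₀ _ halgr]
  have happ := congrArg (fullVal μ b) hmul
  rw [map_mul, fullVal_algebraMap, fullVal_algebraMap] at happ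
  rw [eq_div_iff (vfun_ne_zero μ (tau_ne_zero b hr))]
  exact happ

lemma lcτ_mul {p q : MvPolynomial (Fin n) K} (hp : p ≠ 0) (hq : q ≠ 0) :
    lc (tau b (p * q)) = lc (tau b p) * lc (tau b q) := by
  rw [map_mul]
  exact lc_mul (tau_ne_zero b hp) (tau_ne_zero b hq)

lemma lcτ_ne {p : MvPolynomial (Fin n) K} (hp : p ≠ 0) : lc (tau b p) ≠ 0 :=
  lc_ne_zero (tau_ne_zero b hp)

lemma lcτ_neg {p : MvPolynomial (Fin n) K} (hp : p ≠ 0) :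
    lc (tau b (-p)) = - lc (tau b p) := by
  rw [map_neg]
  exact (neg_facts (tau_ne_zero b hp)).2

/-- the "near" comparison: a function vanishing at `b` has value below every constant. -/
lemma fullVal_near {f : L} {q r : MvPolynomial (Fin n) K} (hq : q ≠ 0)
    (hr : eval b r ≠ 0)
    (hf : f = algebraMap (MvPolynomial (Fin n) K) L q / algebraMap (MvPolynomial (Fin n) K) L r)
    (h0 : eval b q = 0) {a : K} (ha : a ≠ 0) :
    fullVal μ b f < fullVal μ b (algebraMap K L a) := by
  obtain ⟨hmr, hr0⟩ := mdeg_tau_zero b hr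
  have hmq : 0 < mdeg (tau b q) := mdeg_tau_pos b hq h0
  rw [fullVal_div_repr μ b hq hr0 hf, fullVal_algebraMapK μ b ha,
    vfun_eq μ (tau_ne_zero b hq), vfun_eq μ (tau_ne_zero b hr0), ← WithZero.coe_div,
    WithZero.coe_lt_coe, toLex_div', Prod.Lex.lt_iff]
  left
  show Multiplicative.ofAdd (-mdeg (tau b q)) / Multiplicative.ofAdd (-mdeg (tau b r)) < 1
  rw [hmr, neg_zero, ofAdd_zero, div_one, ← ofAdd_zero]
  exact Multiplicative.ofAdd_lt.mpr (by simpa using hmq)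

lemma fullVal_le_one_iff {a : K} (ha : a ≠ 0) :
    fullVal μ b (algebraMap K L a) ≤ 1 ↔ μ a ≤ 1 := by
  rw [fullVal_algebraMapK μ b ha, ← WithZero.coe_one, WithZero.coe_le_coe]
  have h1 : (1 : Lex (Multiplicative (Lex (Fin n → ℤ)) × Γ'ˣ))
      = toLex ((1 : Multiplicative (Lex (Fin n → ℤ))), (1 : Γ'ˣ)) := rfl
  rw [h1, Prod.Lex.le_iff]
  constructor
  · rintro (h | ⟨-, h2⟩)
    · exact absurd h (lt_irrefl _)
    · rw [← Units.val_le_val] at h2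
      simpa using h2
  · intro h
    refine Or.inr ⟨rfl, ?_⟩
    rw [← Units.val_le_val]
    simpa using h

end Aux2

end OVFNear

namespace OVFNear

section Compat

variable {K : Type u} [Field K] [LinearOrder K] [IsStrictOrderedRing K] {Γ' : Type v} [LinearOrderedCommGroupWithZero Γ']
variable {n : ℕ} (μ : Valuation K Γ') (b : Fin n → K)

local notation "L" => FractionRing (MvPolynomial (Fin n) K)

lemma fullVal_le_compat (conv : ∀ x y : K, 0 < x → x < y → μ x ≤ μ y)
    {x y : L} {qx rx qy ry : MvPolynomial (Fin n) K}
    (hqx : qx ≠ 0) (hrx : rx ≠ 0) (hqy : qy ≠ 0) (hry : ry ≠ 0)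
    (hx : x = algebraMap (MvPolynomial (Fin n) K) L qx / algebraMap (MvPolynomial (Fin n) K) L rx)
    (hyx : y - x =
      algebraMap (MvPolynomial (Fin n) K) L qy / algebraMap (MvPolynomial (Fin n) K) L ry)
    (hpx : 0 < lc (tau b qx) * lc (tau b rx)) (hpy : 0 < lc (tau b qy) * lc (tau b ry)) :
    fullVal μ b x ≤ fullVal μ b y := by
  have inj := IsFractionRing.injective (MvPolynomial (Fin n) K) L
  set N₁ : MvPolynomial (Fin n) K := qx * rx * (ry * ry) with hN₁
  set N₂ : MvPolynomial (Fin n) K := qy * ry * (rx * rx) with hN₂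
  set Dd : MvPolynomial (Fin n) K := (rx * rx) * (ry * ry) with hDd
  have hN₁0 : N₁ ≠ 0 := mul_ne_zero (mul_ne_zero hqx hrx) (mul_ne_zero hry hry)
  have hN₂0 : N₂ ≠ 0 := mul_ne_zero (mul_ne_zero hqy hry) (mul_ne_zero hrx hrx)
  have hDd0 : Dd ≠ 0 := mul_ne_zero (mul_ne_zero hrx hrx) (mul_ne_zero hry hry)
  have harx : algebraMap (MvPolynomial (Fin n) K) L rx ≠ 0 := (map_ne_zero_iff _ inj).mpr hrx
  have hary : algebraMap (MvPolynomial (Fin n) K) L ry ≠ 0 := (map_ne_zero_iff _ inj).mpr hry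
  -- positivity of trailing coefficients
  have hlcN₁ : 0 < lc (tau b N₁) := by
    rw [hN₁, lcτ_mul b (mul_ne_zero hqx hrx) (mul_ne_zero hry hry), lcτ_mul b hqx hrx,
      lcτ_mul b hry hry]
    have h2 := mul_self_pos.mpr (lcτ_ne b hry)
    exact mul_pos hpx h2
  have hlcN₂ : 0 < lc (tau b N₂) := by
    rw [hN₂, lcτ_mul b (mul_ne_zero hqy hry) (mul_ne_zero hrx hrx), lcτ_mul b hqy hry,
      lcτ_mul b hrx hrx]
    have h2 := mul_self_pos.mpr (lcτ_ne b hrx)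
    exact mul_pos hpy h2
  obtain ⟨hsum0, _, hvle⟩ := pos_add_facts conv (tau_ne_zero b hN₁0) (tau_ne_zero b hN₂0)
    hlcN₁ hlcN₂
  have hsum0' : N₁ + N₂ ≠ 0 := by
    intro h
    rw [← map_add] at hsum0
    exact hsum0 (by rw [h, map_zero])
  -- representations
  have hDL : algebraMap (MvPolynomial (Fin n) K) L Dd ≠ 0 := (map_ne_zero_iff _ inj).mpr hDd0
  have hx' : x = algebraMap (MvPolynomial (Fin n) K) L N₁
      / algebraMap (MvPolynomial (Fin n) K) L Dd := by
    rw [hx, div_eq_div_iff harx hDL]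
    simp only [← RingHom.map_mul]
    exact congrArg _ (by rw [hN₁, hDd]; ring)
  have hy' : y = algebraMap (MvPolynomial (Fin n) K) L (N₁ + N₂)
      / algebraMap (MvPolynomial (Fin n) K) L Dd := by
    have hy : y = x + (y - x) := by ring
    rw [hy, hyx, hx, div_add_div _ _ harx hary,
      div_eq_div_iff (mul_ne_zero harx hary) hDL]
    simp only [← RingHom.map_mul, ← RingHom.map_add]
    exact congrArg _ (by rw [hN₁, hN₂, hDd]; ring)
  rw [fullVal_div_repr μ b hN₁0 hDd0 hx', fullVal_div_repr μ b hsum0' hDd0 hy']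
  have hvD : vfun μ (tau b Dd) ≠ 0 := vfun_ne_zero μ (tau_ne_zero b hDd0)
  rw [div_eq_mul_inv, div_eq_mul_inv,
    mul_le_mul_iff_of_pos_right (zero_lt_iff.mpr (inv_ne_zero hvD))]
  rw [map_add]
  exact hvle

end Compat

end OVFNear

namespace OVFNear

section SumRepr

variable {K : Type u} [Field K] [LinearOrder K] [IsStrictOrderedRing K] {Γ' : Type v} [LinearOrderedCommGroupWithZero Γ']
variable {n : ℕ} (μ : Valuation K Γ') (b : Fin n → K)

local notation "L" => FractionRing (MvPolynomial (Fin n) K)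

lemma sum_repr (conv : ∀ x y : K, 0 < x → x < y → μ x ≤ μ y)
    {x y : L} {q r q' r' : MvPolynomial (Fin n) K}
    (hq : q ≠ 0) (hr : r ≠ 0) (hq' : q' ≠ 0) (hr' : r' ≠ 0)
    (hx : x = algebraMap (MvPolynomial (Fin n) K) L q / algebraMap (MvPolynomial (Fin n) K) L r)
    (hy : y = algebraMap (MvPolynomial (Fin n) K) L q' / algebraMap (MvPolynomial (Fin n) K) L r')
    (h1 : 0 < lc (tau b q) * lc (tau b r)) (h2 : 0 < lc (tau b q') * lc (tau b r')) :
    ∃ Q R : MvPolynomial (Fin n) K, Q ≠ 0 ∧ R ≠ 0 ∧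
      x + y = algebraMap (MvPolynomial (Fin n) K) L Q / algebraMap (MvPolynomial (Fin n) K) L R ∧
      0 < lc (tau b Q) * lc (tau b R) := by
  have inj := IsFractionRing.injective (MvPolynomial (Fin n) K) L
  set N₁ : MvPolynomial (Fin n) K := q * r * (r' * r') with hN₁
  set N₂ : MvPolynomial (Fin n) K := q' * r' * (r * r) with hN₂
  set Dd : MvPolynomial (Fin n) K := (r * r) * (r' * r') with hDd
  have hN₁0 : N₁ ≠ 0 := mul_ne_zero (mul_ne_zero hq hr) (mul_ne_zero hr' hr')
  have hN₂0 : N₂ ≠ 0 := mul_ne_zero (mul_ne_zero hq' hr') (mul_ne_zero hr hr)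
  have hDd0 : Dd ≠ 0 := mul_ne_zero (mul_ne_zero hr hr) (mul_ne_zero hr' hr')
  have harx : algebraMap (MvPolynomial (Fin n) K) L r ≠ 0 := (map_ne_zero_iff _ inj).mpr hr
  have hary : algebraMap (MvPolynomial (Fin n) K) L r' ≠ 0 := (map_ne_zero_iff _ inj).mpr hr'
  have hDL : algebraMap (MvPolynomial (Fin n) K) L Dd ≠ 0 := (map_ne_zero_iff _ inj).mpr hDd0
  have hlcN₁ : 0 < lc (tau b N₁) := by
    rw [hN₁, lcτ_mul b (mul_ne_zero hq hr) (mul_ne_zero hr' hr'), lcτ_mul b hq hr,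
      lcτ_mul b hr' hr']
    exact mul_pos h1 (mul_self_pos.mpr (lcτ_ne b hr'))
  have hlcN₂ : 0 < lc (tau b N₂) := by
    rw [hN₂, lcτ_mul b (mul_ne_zero hq' hr') (mul_ne_zero hr hr), lcτ_mul b hq' hr',
      lcτ_mul b hr hr]
    exact mul_pos h2 (mul_self_pos.mpr (lcτ_ne b hr))
  obtain ⟨hsum0, hlcsum, -⟩ := pos_add_facts conv (tau_ne_zero b hN₁0) (tau_ne_zero b hN₂0)
    hlcN₁ hlcN₂
  have hsum0' : N₁ + N₂ ≠ 0 := by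
    intro h
    rw [← map_add] at hsum0
    exact hsum0 (by rw [h, map_zero])
  have hlcQ : 0 < lc (tau b (N₁ + N₂)) := by
    rw [map_add]
    exact hlcsum
  have hlcD : 0 < lc (tau b Dd) := by
    rw [hDd, lcτ_mul b (mul_ne_zero hr hr) (mul_ne_zero hr' hr'), lcτ_mul b hr hr,
      lcτ_mul b hr' hr']
    exact mul_pos (mul_self_pos.mpr (lcτ_ne b hr)) (mul_self_pos.mpr (lcτ_ne b hr'))
  refine ⟨N₁ + N₂, Dd, hsum0', hDd0, ?_, mul_pos hlcQ hlcD⟩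
  rw [hx, hy, div_add_div _ _ harx hary, div_eq_div_iff (mul_ne_zero harx hary) hDL]
  simp only [← RingHom.map_mul, ← RingHom.map_add]
  exact congrArg _ (by rw [hN₁, hN₂, hDd]; ring)

end SumRepr

end OVFNear


/-- For every `b ∈ Kⁿ` there is an OVF-valuation on `K(x₁,…,xₙ)` near `b`. -/
theorem exists_ovf_valuation_near {K : Type u} [Field K] [LinearOrder K] [IsStrictOrderedRing K] {Γ₀ : Type v}
    [LinearOrderedCommGroupWithZero Γ₀] (ν : Valuation K Γ₀) (hK : IsRCVF ν)
    {n : ℕ} (b : Fin n → K) :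
    ∃ (Γ : Type u) (_ : LinearOrderedCommGroupWithZero Γ)
      (w : Valuation (RatFuncField K n) Γ), IsOVFValuation ν w ∧ IsNear w b := by
  classical
  obtain ⟨-, hconv⟩ := hK
  set μ : Valuation K ν.valuationSubring.ValueGroup := ν.valuationSubring.valuation with hμdef
  have hequiv : ν.IsEquiv μ := Valuation.isEquiv_valuation_valuationSubring ν
  have conv : ∀ x y : K, 0 < x → x < y → μ x ≤ μ y := fun x y hx hxy =>
    (hequiv x y).mp (hconv x y hx hxy)
  have hle1 : ∀ a : K, μ a ≤ 1 ↔ ν a ≤ 1 := by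
    intro a
    have h := hequiv a 1
    rw [map_one, map_one] at h
    exact h.symm
  have inj := IsFractionRing.injective (MvPolynomial (Fin n) K) (RatFuncField K n)
  refine ⟨OVFNear.GammaV (ν.valuationSubring.ValueGroup) n, inferInstance,
    OVFNear.fullVal μ b, ⟨?_, ?_⟩, ?_⟩
  · -- ValExtends
    intro a
    by_cases ha : a = 0
    · subst ha
      rw [map_zero, map_zero, map_zero]
      simp [zero_le']
    · rw [OVFNear.fullVal_le_one_iff μ b ha]
      exact hle1 a
  · -- compatible ordering
    refine ⟨⟨{f | f = 0 ∨ ∃ q r : MvPolynomial (Fin n) K, q ≠ 0 ∧ r ≠ 0 ∧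
        f = algebraMap (MvPolynomial (Fin n) K) (RatFuncField K n) q /
          algebraMap (MvPolynomial (Fin n) K) (RatFuncField K n) r ∧
        0 < OVFNear.lc (OVFNear.tau b q) * OVFNear.lc (OVFNear.tau b r)},
        ?_, ?_, ?_, ?_, ?_⟩, ?_⟩
    · -- add_mem
      rintro x (rfl | ⟨q, r, hq, hr, hxe, hxp⟩) y hy
      · rwa [zero_add]
      rcases hy with rfl | ⟨q', r', hq', hr', hye, hyp⟩
      · rw [add_zero]
        exact Or.inr ⟨q, r, hq, hr, hxe, hxp⟩
      obtain ⟨Q, R, hQ, hR, he, hp⟩ :=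
        OVFNear.sum_repr μ b conv hq hr hq' hr' hxe hye hxp hyp
      exact Or.inr ⟨Q, R, hQ, hR, he, hp⟩
    · -- mul_mem
      rintro x (rfl | ⟨q, r, hq, hr, hxe, hxp⟩) y hy
      · rw [zero_mul]; exact Or.inl rfl
      rcases hy with rfl | ⟨q', r', hq', hr', hye, hyp⟩
      · rw [mul_zero]; exact Or.inl rfl
      refine Or.inr ⟨q * q', r * r', mul_ne_zero hq hq', mul_ne_zero hr hr', ?_, ?_⟩
      · rw [hxe, hye, div_mul_div_comm, map_mul, map_mul]
      · rw [OVFNear.lcτ_mul b hq hq', OVFNear.lcτ_mul b hr hr']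
        have : OVFNear.lc (OVFNear.tau b q) * OVFNear.lc (OVFNear.tau b q') *
            (OVFNear.lc (OVFNear.tau b r) * OVFNear.lc (OVFNear.tau b r')) =
            (OVFNear.lc (OVFNear.tau b q) * OVFNear.lc (OVFNear.tau b r)) *
            (OVFNear.lc (OVFNear.tau b q') * OVFNear.lc (OVFNear.tau b r')) := by ring
        rw [this]
        exact mul_pos hxp hyp
    · -- square_mem
      intro x
      by_cases hx0 : x = 0
      · subst hx0
        rw [zero_mul]
        exact Or.inl rfl
      obtain ⟨q, r, hrmem, he⟩ :=
        IsFractionRing.div_surjective (A := MvPolynomial (Fin n) K) x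
      have hr : r ≠ 0 := mem_nonZeroDivisors_iff_ne_zero.mp hrmem
      have hq : q ≠ 0 := by
        rintro rfl
        rw [map_zero, zero_div] at he
        exact hx0 he.symm
      refine Or.inr ⟨q * q, r * r, mul_ne_zero hq hq, mul_ne_zero hr hr, ?_, ?_⟩
      · rw [← he, div_mul_div_comm, map_mul, map_mul]
      · rw [OVFNear.lcτ_mul b hq hq, OVFNear.lcτ_mul b hr hr]
        have h0 := mul_self_pos.mpr
          (mul_ne_zero (OVFNear.lcτ_ne b hq) (OVFNear.lcτ_ne b hr))
        have : OVFNear.lc (OVFNear.tau b q) * OVFNear.lc (OVFNear.tau b q) *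
            (OVFNear.lc (OVFNear.tau b r) * OVFNear.lc (OVFNear.tau b r)) =
            (OVFNear.lc (OVFNear.tau b q) * OVFNear.lc (OVFNear.tau b r)) *
            (OVFNear.lc (OVFNear.tau b q) * OVFNear.lc (OVFNear.tau b r)) := by ring
        rw [this]
        exact h0
    · -- neg_one_not_mem
      rintro (h0 | ⟨q, r, hq, hr, he, hp⟩)
      · exact (by norm_num : (-1 : RatFuncField K n) ≠ 0) h0
      · have hralg : algebraMap (MvPolynomial (Fin n) K) (RatFuncField K n) r ≠ 0 :=
          (map_ne_zero_iff _ inj).mpr hr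
        have he' : -algebraMap (MvPolynomial (Fin n) K) (RatFuncField K n) r =
            algebraMap (MvPolynomial (Fin n) K) (RatFuncField K n) q := by
          have := (eq_div_iff hralg).mp he
          rw [neg_one_mul] at this
          exact this
        have hqr : q = -r := inj (by rw [RingHom.map_neg, ← he'])
        rw [hqr, OVFNear.lcτ_neg b hr] at hp
        have h2 := mul_self_pos.mpr (OVFNear.lcτ_ne b hr)
        nlinarith
    · -- total
      intro x
      by_cases hx0 : x = 0
      · exact Or.inl (Or.inl hx0)
      obtain ⟨q, r, hrmem, he⟩ :=
        IsFractionRing.div_surjective (A := MvPolynomial (Fin n) K) x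
      have hr : r ≠ 0 := mem_nonZeroDivisors_iff_ne_zero.mp hrmem
      have hq : q ≠ 0 := by
        rintro rfl
        rw [map_zero, zero_div] at he
        exact hx0 he.symm
      rcases lt_trichotomy 0 (OVFNear.lc (OVFNear.tau b q) * OVFNear.lc (OVFNear.tau b r))
        with hpos | hzero | hneg
      · exact Or.inl (Or.inr ⟨q, r, hq, hr, he.symm, hpos⟩)
      · exact absurd hzero.symm
          (mul_ne_zero (OVFNear.lcτ_ne b hq) (OVFNear.lcτ_ne b hr))
      · refine Or.inr (Or.inr ⟨-q, r, neg_ne_zero.mpr hq, hr, ?_, ?_⟩)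
        · rw [← he, RingHom.map_neg, neg_div]
        · rw [OVFNear.lcτ_neg b hq]
          linarith
    · -- compatibility
      intro x y hxpos hyxpos
      obtain ⟨hxP, hx0⟩ := hxpos
      obtain ⟨hyxP, hyx0⟩ := hyxpos
      rcases hxP with h | ⟨qx, rx, hqx, hrx, hxe, hpx⟩
      · exact absurd h hx0
      rcases hyxP with h | ⟨qy, ry, hqy, hry, hyxe, hpy⟩
      · exact absurd h hyx0
      exact OVFNear.fullVal_le_compat μ b conv hqx hrx hqy hry hxe hyxe hpx hpy
  · -- near
    intro f hf a ha
    obtain ⟨q, r, hrne, hfe, hv⟩ := hf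
    have hq0 : eval b q = 0 := by
      rcases div_eq_zero_iff.mp hv.symm with h | h
      · exact h
      · exact absurd h hrne
    by_cases hq : q = 0
    · rw [hfe, hq, map_zero, zero_div, map_zero]
      rw [OVFNear.fullVal_algebraMapK μ b ha]
      exact lt_of_le_of_ne zero_le' (Ne.symm WithZero.coe_ne_zero)
    · exact OVFNear.fullVal_near μ b hq hrne hfe hq0 ha
end

section
/- Let (K,ν) be a real closed valued field, L = K(x₁,…,xₙ), and let ν_b be an OVF-valuation on L near b ∈ Kⁿ. Assume p ∈ L is defined at b and p(b) > 0. Then for every order ≤_L on L which is compatible with ν_b one has p ≥_L 0. -/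
universe u v w

open MvPolynomial

set_option maxHeartbeats 1000000 in
set_option synthInstance.maxHeartbeats 400000 in
/-- If `ν_b` is an OVF-valuation near `b` and `p(b) > 0`, then `p ≥_L 0`
for every ordering of `L` compatible with `ν_b`. -/
theorem nonneg_of_pos_at_near_point {K : Type u} [Field K] [LinearOrder K] [IsStrictOrderedRing K] {Γ₀ : Type v}
    [LinearOrderedCommGroupWithZero Γ₀] (ν : Valuation K Γ₀) (hK : IsRCVF ν)
    {n : ℕ} {Γ : Type w} [LinearOrderedCommGroupWithZero Γ]
    (wb : Valuation (RatFuncField K n) Γ) (b : Fin n → K)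
    (hovf : IsOVFValuation ν wb) (hnear : IsNear wb b)
    (p : RatFuncField K n) (v : K) (hp : HasEvalAt p b v) (hv : 0 < v)
    (O : FieldOrdering (RatFuncField K n)) (hcomp : O.IsCompatible wb) :
    p ∈ O.P := by
  classical
  obtain ⟨q, r, hr, hpeq, hveq⟩ := hp
  have hv0 : v ≠ 0 := ne_of_gt hv
  -- p ≠ 0
  have hq : eval b q ≠ 0 := by
    intro h
    rw [hveq, h, zero_div] at hv0
    exact hv0 rfl
  have hp0 : p ≠ 0 := by
    intro h
    rw [h] at hpeq
    have : algebraMap (MvPolynomial (Fin n) K) (RatFuncField K n) q = 0 := by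
      have hr' : (algebraMap (MvPolynomial (Fin n) K) (RatFuncField K n)) r ≠ 0 := by
        intro h0
        exact hr (by simpa using (IsFractionRing.to_map_eq_zero_iff.mp h0) ▸ rfl)
      field_simp at hpeq
      simpa using hpeq.symm
    have : q = 0 := IsFractionRing.to_map_eq_zero_iff.mp this
    exact hq (by simp [this])
  -- c := image of v in L, is a positive square
  set c : RatFuncField K n := algebraMap K (RatFuncField K n) v with hc
  have hy : ∃ y : K, y * y = v := hK.1.1 v hv.le
  obtain ⟨y, hy⟩ := hy
  have hcP : c ∈ O.P := by
    have : c = algebraMap K (RatFuncField K n) y * algebraMap K (RatFuncField K n) y := by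
      rw [← map_mul, hy]
    rw [this]
    exact O.square_mem _
  have hc0 : c ≠ 0 := by
    simp only [hc, ne_eq, map_eq_zero]
    exact hv0
  have hcpos : O.Pos c := ⟨hcP, hc0⟩
  -- f := p - c vanishes at b
  have hfe : HasEvalAt (p - c) b 0 := by
    refine ⟨q - MvPolynomial.C v * r, r, hr, ?_, ?_⟩
    · have htower : (algebraMap K (RatFuncField K n)) v =
          algebraMap (MvPolynomial (Fin n) K) (RatFuncField K n) (MvPolynomial.C v) := by
        rw [IsScalarTower.algebraMap_apply K (MvPolynomial (Fin n) K) (RatFuncField K n), MvPolynomial.algebraMap_eq]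
      have hr' : (algebraMap (MvPolynomial (Fin n) K) (RatFuncField K n)) r ≠ 0 := by
        intro h0
        exact hr ((IsFractionRing.to_map_eq_zero_iff.mp h0) ▸ (by simp))
      rw [hpeq, hc, htower]
      field_simp
      rw [map_sub, map_mul]
      ring
    · simp only [map_sub, map_mul, eval_C]
      rw [hveq]
      field_simp
      ring
  have hwlt : wb (p - c) < wb c := by
    have := hnear (p - c) hfe v hv0
    simpa [hc] using this
  -- by contradiction
  by_contra hpP
  have hnp : O.Pos (-p) := by
    rcases O.total p with h | h
    · exact absurd h hpP
    · exact ⟨h, by simpa using hp0⟩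
  have hcle : wb c ≤ wb (c - p) := by
    apply hcomp c (c - p) hcpos
    simpa using hnp
  have : wb (c - p) = wb (p - c) := Valuation.map_sub_swap wb c p
  rw [this] at hcle
  exact absurd hwlt (not_lt.mpr hcle)
end

section
/- Let (K,ν) be a real closed valued field, L = K(x₁,…,xₙ), and let p₁,…,p_m ∈ K[x₁,…,xₙ] be polynomials with S_p̄ nonempty. Then for every f ∈ Cone({p₁,…,p_m}) (computed in L) one has 1 + f ≠ 0 and the rational function 1/(1+f) is OVF-integral on S_p̄. -/
universe u v w

open MvPolynomial

section AuxOrd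

variable {L : Type*} [Field L] (O : FieldOrdering L)

lemma FieldOrdering.not_pos_both {x : L} (h1 : O.Pos x) (h2 : O.Pos (-x)) : False := by
  obtain ⟨hx, hx0⟩ := h1
  obtain ⟨hnx, _⟩ := h2
  have hsq := O.square_mem x⁻¹
  have : (-1 : L) ∈ O.P := by
    have := O.mul_mem _ (O.mul_mem _ hx _ hnx) _ hsq
    have heq : x * -x * (x⁻¹ * x⁻¹) = -1 := by
      field_simp
    rwa [heq] at this
  exact O.neg_one_not_mem this

lemma FieldOrdering.pos_add {x y : L} (h1 : O.Pos x) (h2 : O.Pos y) : O.Pos (x + y) := by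
  refine ⟨O.add_mem _ h1.1 _ h2.1, ?_⟩
  intro h
  have hy : y = -x := by linear_combination h
  rw [hy] at h2
  exact O.not_pos_both h1 h2

lemma FieldOrdering.pos_mul {x y : L} (h1 : O.Pos x) (h2 : O.Pos y) : O.Pos (x * y) :=
  ⟨O.mul_mem _ h1.1 _ h2.1, mul_ne_zero h1.2 h2.2⟩

lemma FieldOrdering.pos_one : O.Pos 1 :=
  ⟨by simpa using O.square_mem 1, one_ne_zero⟩

lemma FieldOrdering.pos_sq {x : L} (hx : x ≠ 0) : O.Pos (x * x) :=
  ⟨O.square_mem x, mul_ne_zero hx hx⟩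

end AuxOrd

section AuxPoly

variable {K : Type u} [Field K] [LinearOrder K] [IsStrictOrderedRing K]

open Set

lemma mv_eq_zero_of_eval_zero_on_pi : ∀ {n : ℕ} (q : MvPolynomial (Fin n) K)
    (S : Fin n → Set K), (∀ i, (S i).Infinite) →
    (∀ b : Fin n → K, (∀ i, b i ∈ S i) → eval b q = 0) → q = 0 := by
  intro n
  induction n with
  | zero =>
    intro q S _ h
    apply MvPolynomial.funext
    intro x
    rw [map_zero]
    exact h x (fun i => i.elim0)
  | succ n ih =>
    intro q S hS h
    have key : ∀ k, (finSuccEquiv K n q).coeff k = 0 := by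
      intro k
      apply ih _ (fun i => S i.succ) (fun i => hS _)
      intro b hb
      have hQ : (Polynomial.map (MvPolynomial.eval b) (finSuccEquiv K n q)) = 0 := by
        apply Polynomial.eq_zero_of_infinite_isRoot
        apply (hS 0).mono
        intro y hy
        show Polynomial.IsRoot _ y
        rw [Polynomial.IsRoot, ← eval_eq_eval_mv_eval']
        apply h
        intro i
        refine Fin.cases ?_ ?_ i
        · simpa using hy
        · intro j; simpa using hb j
      have := congrArg (fun Q => Polynomial.coeff Q k) hQ
      simpa [Polynomial.coeff_map] using this
    have hz : finSuccEquiv K n q = 0 := Polynomial.ext fun k => by simp [key k]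
    have := (finSuccEquiv K n).injective (hz.trans (map_zero (finSuccEquiv K n)).symm)
    simpa using this

lemma exists_eval_ne_zero_on_SetSP {n m : ℕ} (p : Fin m → MvPolynomial (Fin n) K)
    (hS : (SetSP p).Nonempty) (q : MvPolynomial (Fin n) K) (hq : q ≠ 0) :
    ∃ b ∈ SetSP p, eval b q ≠ 0 := by
  by_contra hcon
  push_neg at hcon
  letI : TopologicalSpace K := Preorder.topology K
  haveI : OrderTopology K := ⟨rfl⟩
  have hcont : ∀ r : MvPolynomial (Fin n) K, Continuous fun b : Fin n → K => eval b r := by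
    intro r
    induction r using MvPolynomial.induction_on with
    | C a => simpa using continuous_const
    | add r s hr hs => simp only [map_add]; exact hr.add hs
    | mul_X r i hr => simp only [map_mul, eval_X]; exact hr.mul (continuous_apply i)
  have hopen : IsOpen (SetSP p) := by
    have : SetSP p = ⋂ i, (fun b : Fin n → K => eval b (p i)) ⁻¹' Ioi 0 := by
      ext b; simp [SetSP]
    rw [this]
    exact isOpen_iInter_of_finite fun i => isOpen_Ioi.preimage (hcont (p i))
  obtain ⟨b₀, hb₀⟩ := hS
  obtain ⟨u, hu, husub⟩ := (isOpen_pi_iff'.mp hopen) b₀ hb₀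
  have hio : ∀ i, ∃ l r : K, l < r ∧ Ioo l r ⊆ u i := by
    intro i
    obtain ⟨l, r, hmem, hsub⟩ := mem_nhds_iff_exists_Ioo_subset.mp
      ((hu i).1.mem_nhds (hu i).2)
    exact ⟨l, r, lt_trans hmem.1 hmem.2, hsub⟩
  choose l r hlr hsub using hio
  have := mv_eq_zero_of_eval_zero_on_pi q (fun i => Ioo (l i) (r i))
    (fun i => Set.Ioo_infinite (hlr i)) ?_
  · exact hq this
  · intro b hb
    apply hcon
    apply husub
    intro i _
    exact hsub i (hb i)

lemma cone_repr {n m : ℕ} (p : Fin m → MvPolynomial (Fin n) K) (f : RatFuncField K n)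
    (hf : InCone
      (Set.range fun i => algebraMap (MvPolynomial (Fin n) K) (RatFuncField K n) (p i)) f) :
    ∃ F g : MvPolynomial (Fin n) K, g ≠ 0 ∧
      f = algebraMap (MvPolynomial (Fin n) K) (RatFuncField K n) F /
        (algebraMap (MvPolynomial (Fin n) K) (RatFuncField K n) g) ^ 2 ∧
      ∀ b ∈ SetSP p, 0 ≤ eval b F := by
  have hinj : Function.Injective
      (algebraMap (MvPolynomial (Fin n) K) (RatFuncField K n)) :=
    IsFractionRing.injective _ _
  induction hf with
  | mem x hx =>
    obtain ⟨i, rfl⟩ := hx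
    exact ⟨p i, 1, one_ne_zero, by simp, fun b hb => (hb i).le⟩
  | sq x hx =>
    obtain ⟨u, v, hv, rfl⟩ := IsFractionRing.div_surjective (A := MvPolynomial (Fin n) K) x
    have hv0 : v ≠ 0 := nonZeroDivisors.ne_zero hv
    refine ⟨u * u, v, hv0, by rw [RingHom.map_mul]; ring, fun b _ => by simpa using mul_self_nonneg _⟩
  | add x y hx hy ihx ihy =>
    obtain ⟨F₁, g₁, h₁, e₁, n₁⟩ := ihx
    obtain ⟨F₂, g₂, h₂, e₂, n₂⟩ := ihy
    refine ⟨F₁ * (g₂ * g₂) + F₂ * (g₁ * g₁), g₁ * g₂, mul_ne_zero h₁ h₂, ?_, ?_⟩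
    · have hg₁ : algebraMap (MvPolynomial (Fin n) K) (RatFuncField K n) g₁ ≠ 0 :=
        fun h => h₁ (hinj (h.trans (RingHom.map_zero _).symm))
      have hg₂ : algebraMap (MvPolynomial (Fin n) K) (RatFuncField K n) g₂ ≠ 0 :=
        fun h => h₂ (hinj (h.trans (RingHom.map_zero _).symm))
      rw [e₁, e₂, RingHom.map_add, RingHom.map_mul, RingHom.map_mul, RingHom.map_mul, RingHom.map_mul]
      field_simp
      simp only [map_mul]
      ring
    · intro b hb
      have := add_nonneg (mul_nonneg (n₁ b hb) (mul_self_nonneg (eval b g₂)))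
        (mul_nonneg (n₂ b hb) (mul_self_nonneg (eval b g₁)))
      simpa using this
  | mul x y hx hy ihx ihy =>
    obtain ⟨F₁, g₁, h₁, e₁, n₁⟩ := ihx
    obtain ⟨F₂, g₂, h₂, e₂, n₂⟩ := ihy
    refine ⟨F₁ * F₂, g₁ * g₂, mul_ne_zero h₁ h₂, ?_, ?_⟩
    · rw [e₁, e₂, RingHom.map_mul, RingHom.map_mul]
      ring
    · intro b hb
      simpa using mul_nonneg (n₁ b hb) (n₂ b hb)

end AuxPoly


set_option maxHeartbeats 2000000 in
set_option synthInstance.maxHeartbeats 200000 in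
/-- For `f ∈ Cone({p₁,…,p_m})`, `1 + f ≠ 0` and `1/(1+f)` is
OVF-integral on `S_p̄`. -/
theorem one_add_cone_inv_ovf_integral {K : Type u} [Field K] [LinearOrder K] [IsStrictOrderedRing K] {Γ₀ : Type v}
    [LinearOrderedCommGroupWithZero Γ₀] (ν : Valuation K Γ₀) (hK : IsRCVF ν)
    {n m : ℕ} (p : Fin m → MvPolynomial (Fin n) K) (hS : (SetSP p).Nonempty)
    (f : RatFuncField K n)
    (hf : InCone
      (Set.range fun i => algebraMap (MvPolynomial (Fin n) K) (RatFuncField K n) (p i)) f) :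
    1 + f ≠ 0 ∧ ∀ b ∈ SetSP p, IsOVFIntegralAt ν (1 + f)⁻¹ b := by
  obtain ⟨F, g, hg, hfe, hF⟩ := cone_repr p f hf
  have hinj : Function.Injective
      (algebraMap (MvPolynomial (Fin n) K) (RatFuncField K n)) :=
    IsFractionRing.injective _ _
  have hginj : ∀ q : MvPolynomial (Fin n) K,
      algebraMap (MvPolynomial (Fin n) K) (RatFuncField K n) q = 0 → q = 0 :=
    fun q h => hinj (h.trans (RingHom.map_zero _).symm)
  constructor
  · -- 1 + f ≠ 0
    intro h0
    have hgL : algebraMap (MvPolynomial (Fin n) K) (RatFuncField K n) g ≠ 0 :=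
      fun h => hg (hginj g h)
    have hFg : algebraMap (MvPolynomial (Fin n) K) (RatFuncField K n) (g * g + F) = 0 := by
      rw [RingHom.map_add, RingHom.map_mul]
      have : algebraMap (MvPolynomial (Fin n) K) (RatFuncField K n) F =
          -(algebraMap (MvPolynomial (Fin n) K) (RatFuncField K n) g) ^ 2 := by
        have h1 : f = -1 := by linear_combination h0
        rw [h1] at hfe
        field_simp at hfe
        linear_combination -hfe
      rw [this]
      ring
    have hFeq : F = -(g * g) := by
      have := hginj _ hFg
      linear_combination this
    have hvan : ∀ b ∈ SetSP p, eval b g = 0 := by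
      intro b hb
      have h1 := hF b hb
      rw [hFeq] at h1
      simp only [map_neg, map_mul] at h1
      nlinarith [mul_self_nonneg (eval b g)]
    obtain ⟨b, hb, hbne⟩ := exists_eval_ne_zero_on_SetSP p hS g hg
    exact hbne (hvan b hb)
  · -- OVF-integrality
    intro b hb Γ instΓ wb hOVF hnear
    obtain ⟨hext, O, hcomp⟩ := hOVF
    -- each pᵢ is positive for O
    have hpos : ∀ i, O.Pos (algebraMap (MvPolynomial (Fin n) K) (RatFuncField K n) (p i)) := by
      intro i
      have hvi : 0 < eval b (p i) := hb i
      obtain ⟨c, hc⟩ := hK.1.1 _ hvi.le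
      have hc0 : c ≠ 0 := by
        rintro rfl
        rw [mul_zero] at hc
        exact hvi.ne hc
      set ι : K →+* RatFuncField K n := algebraMap K (RatFuncField K n) with hι
      have hιc : ι c ≠ 0 := fun h => hc0 (ι.injective (by simpa using h))
      have hA : ι (eval b (p i)) = ι c * ι c := by rw [← map_mul, hc]
      have hApos : O.Pos (ι (eval b (p i))) := by
        rw [hA]; exact O.pos_sq hιc
      set P : RatFuncField K n := algebraMap (MvPolynomial (Fin n) K) (RatFuncField K n) (p i)
        with hP
      have hPne : P ≠ 0 := by
        intro h
        have : p i = 0 := hginj _ h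
        rw [this] at hvi
        simp at hvi
      rcases O.total P with h | h
      · exact ⟨h, hPne⟩
      · exfalso
        have hPnegpos : O.Pos (-P) := ⟨h, neg_ne_zero.mpr hPne⟩
        set gL : RatFuncField K n := P - ι (eval b (p i)) with hgL
        have hCv : algebraMap (MvPolynomial (Fin n) K) (RatFuncField K n)
            (MvPolynomial.C (eval b (p i))) = ι (eval b (p i)) := by
          rw [hι, IsScalarTower.algebraMap_apply K (MvPolynomial (Fin n) K) (RatFuncField K n),
            MvPolynomial.algebraMap_eq]
        have hgev : HasEvalAt gL b 0 := by
          refine ⟨p i - MvPolynomial.C (eval b (p i)), 1, by simp, ?_, by simp⟩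
          rw [RingHom.map_sub, hCv, RingHom.map_one, div_one]
        have hnr := hnear gL hgev (eval b (p i)) hvi.ne'
        rcases eq_or_ne gL 0 with hg0 | hg0
        · have hPA : P = ι (eval b (p i)) := by
            have := sub_eq_zero.mp hg0
            exact this
          rw [hPA] at hPnegpos
          exact O.not_pos_both hApos hPnegpos
        · have hneggpos : O.Pos (-gL) := by
            have : -gL = ι (eval b (p i)) + -P := by rw [hgL]; ring
            rw [this]
            exact O.pos_add hApos hPnegpos
          have hle := hcomp (ι (eval b (p i))) (-gL) hApos (by
            have : -gL - ι (eval b (p i)) = -P := by rw [hgL]; ring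
            rw [this]
            exact hPnegpos)
          rw [Valuation.map_neg] at hle
          exact absurd hle (not_le_of_gt hnr)
    -- f is positive for O
    have hposf : O.Pos f := by
      clear hfe hF
      induction hf with
      | mem x hx =>
        obtain ⟨i, rfl⟩ := hx
        exact hpos i
      | sq x hx => exact O.pos_sq hx
      | add x y hx hy ihx ihy => exact O.pos_add ihx ihy
      | mul x y hx hy ihx ihy => exact O.pos_mul ihx ihy
    have h1f : (1 : Γ) ≤ wb (1 + f) := by
      have := hcomp 1 (1 + f) O.pos_one (by simpa using hposf)
      simpa using this
    rw [map_inv₀]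
    exact inv_le_one_of_one_le₀ h1f
end

section
/- Let (K,ν) be a real closed valued field, L = K(x₁,…,xₙ), and let p₁,…,p_m ∈ K[x₁,…,xₙ] be polynomials with S_p̄ nonempty. Then every element of the O_ν-subalgebra A_p̄ of L generated by I_p̄ = {1/(1+f) : f ∈ Cone({p₁,…,p_m})} is OVF-integral on S_p̄. -/
universe u v w

open MvPolynomial

lemma FieldOrdering.pos_one' {L : Type*} [Field L] (O : FieldOrdering L) : O.Pos 1 :=
  ⟨by simpa using O.square_mem 1, one_ne_zero⟩

lemma FieldOrdering.not_both' {L : Type*} [Field L] (O : FieldOrdering L) {x : L}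
    (hx : x ∈ O.P) (hx' : -x ∈ O.P) (h0 : x ≠ 0) : False := by
  have hsq : x⁻¹ * x⁻¹ ∈ O.P := O.square_mem x⁻¹
  have hmem : (-x) * (x * (x⁻¹ * x⁻¹)) ∈ O.P :=
    O.mul_mem _ hx' _ (O.mul_mem _ hx _ hsq)
  have heq : (-x) * (x * (x⁻¹ * x⁻¹)) = -1 := by field_simp
  exact O.neg_one_not_mem (heq ▸ hmem)

lemma FieldOrdering.pos_add' {L : Type*} [Field L] (O : FieldOrdering L) {x y : L}
    (hx : O.Pos x) (hy : O.Pos y) : O.Pos (x + y) := by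
  refine ⟨O.add_mem _ hx.1 _ hy.1, fun h => ?_⟩
  have hy' : y = -x := by linear_combination h
  exact O.not_both' hx.1 (hy' ▸ hy.1) hx.2

set_option maxHeartbeats 1000000 in
set_option synthInstance.maxHeartbeats 400000 in
/-- Every element of the `O_ν`-algebra `A_p̄` generated by `I_p̄` is
OVF-integral on `S_p̄`. -/
theorem algebra_gen_ovf_integral {K : Type u} [Field K] [LinearOrder K] [IsStrictOrderedRing K] {Γ₀ : Type v}
    [LinearOrderedCommGroupWithZero Γ₀] (ν : Valuation K Γ₀) (hK : IsRCVF ν)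
    {n m : ℕ} (p : Fin m → MvPolynomial (Fin n) K) (hS : (SetSP p).Nonempty) :
    ∀ h ∈ OAlgebraGen ν (SetIP p), ∀ b ∈ SetSP p, IsOVFIntegralAt ν h b := by
  intro h hh b hb Γ _ wb hOVF hnear
  obtain ⟨hext, O, hcomp⟩ := hOVF
  set L := RatFuncField K n
  -- every generator `p i` (as an element of `L`) is positive for `O`
  have hgen : ∀ i, O.Pos (algebraMap (MvPolynomial (Fin n) K) L (p i)) := by
    intro i
    set u : L := algebraMap (MvPolynomial (Fin n) K) L (p i) with hu_def
    have hc : 0 < eval b (p i) := hb i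
    obtain ⟨y, hy⟩ := hK.1.1 _ hc.le
    set a : L := algebraMap K L (eval b (p i)) with ha_def
    have hamem : a ∈ O.P := by
      have : a = algebraMap K L y * algebraMap K L y := by rw [← map_mul, hy]
      rw [this]; exact O.square_mem _
    have ha0 : a ≠ 0 := by
      intro h0
      rw [ha_def] at h0
      exact hc.ne' ((algebraMap K L).injective (by rw [h0, map_zero]))
    have hu0 : u ≠ 0 := by
      intro h0
      rw [hu_def] at h0
      have : p i = 0 := IsFractionRing.injective (MvPolynomial (Fin n) K) L
        (by rw [h0, map_zero])
      rw [this] at hc; simp at hc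
    have hua : u - a = algebraMap (MvPolynomial (Fin n) K) L
        (p i - MvPolynomial.C (eval b (p i))) := by
      rw [(algebraMap (MvPolynomial (Fin n) K) L).map_sub, ← MvPolynomial.algebraMap_eq,
        ← IsScalarTower.algebraMap_apply K (MvPolynomial (Fin n) K) L]
    have hnear' : wb (u - a) < wb a := by
      apply hnear
      · exact ⟨p i - MvPolynomial.C (eval b (p i)), 1, by simp,
          by rw [map_one, div_one]; exact hua, by simp⟩
      · exact hc.ne'
    refine ⟨?_, hu0⟩
    rcases O.total u with hP | hP
    · exact hP
    · exfalso
      have hpa : O.Pos a := ⟨hamem, ha0⟩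
      have hnu : O.Pos ((a - u) - a) := by
        have : O.Pos (-u) := ⟨hP, neg_ne_zero.mpr hu0⟩
        simpa using this
      have hle := hcomp a (a - u) hpa hnu
      rw [show a - u = -(u - a) by ring, Valuation.map_neg] at hle
      exact absurd hle (not_le.mpr hnear')
  -- every element of the cone is positive for `O`
  have hpos : ∀ f : L,
      InCone (Set.range fun i => algebraMap (MvPolynomial (Fin n) K) L (p i)) f →
      O.Pos f := by
    intro f hf
    induction hf with
    | mem x hx => obtain ⟨i, rfl⟩ := hx; exact hgen i
    | sq x hx => exact ⟨O.square_mem x, mul_ne_zero hx hx⟩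
    | add x y _ _ ihx ihy => exact O.pos_add' ihx ihy
    | mul x y _ _ ihx ihy => exact ⟨O.mul_mem _ ihx.1 _ ihy.1, mul_ne_zero ihx.2 ihy.2⟩
  -- the generators of the subring lie in the valuation subring of `wb`
  have key : OAlgebraGen ν (SetIP p) ≤ wb.valuationSubring.toSubring := by
    rw [OAlgebraGen, Subring.closure_le]
    rintro x (⟨a, ha, rfl⟩ | ⟨f, hf, rfl⟩)
    · exact (hext a).2 ha
    · have hfpos : O.Pos f := hpos f hf
      have h1 : (1 : Γ) ≤ wb (1 + f) := by
        have := hcomp 1 (1 + f) O.pos_one' (by simpa using hfpos)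
        simpa using this
      have hlt : (0 : Γ) < wb (1 + f) := lt_of_lt_of_le zero_lt_one h1
      show wb (1 + f)⁻¹ ≤ 1
      rw [map_inv₀]
      exact (inv_le_one₀ hlt).mpr h1
  exact key hh
end

section
/- Let (K,ν) be a real closed valued field, L = K(x₁,…,xₙ), p₁,…,p_m ∈ K[x₁,…,xₙ] with S_p̄ nonempty, and let A_p̄ be the O_ν-subalgebra of L generated by I_p̄ = {1/(1+f) : f ∈ Cone({p₁,…,p_m})}. Let ν̃ be a valuation on L extending ν such that A_p̄ ⊆ O_ν̃, let ℓ be the residue field of (L,ν̃), and let C = {res(q/c²) : q belongs to the multiplicative semigroup generated by p₁,…,p_m, c ∈ L, ν̃(q) = ν̃(c²)} ⊆ ℓ. Then there exists a linear order on ℓ making ℓ an ordered field in which every element of C is nonnegative. -/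
universe u v w

open MvPolynomial

lemma aux_poly_pos_near_zero {K : Type*} [Field K] [LinearOrder K] [IsStrictOrderedRing K] (P : Polynomial K)
    (h0 : 0 < P.eval 0) : ∃ δ : K, 0 < δ ∧ ∀ t : K, 0 ≤ t → t ≤ δ → 0 < P.eval t := by
  set Q := P.divX with hQdef
  have key : ∀ t : K, P.eval t = t * Q.eval t + P.eval 0 := by
    intro t
    conv_lhs => rw [← Polynomial.X_mul_divX_add P]
    simp [← hQdef, ← Polynomial.coeff_zero_eq_eval_zero]
  set M : K := ∑ i ∈ Finset.range (Q.natDegree + 1), |Q.coeff i| with hMdef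
  have hM : 0 ≤ M := Finset.sum_nonneg fun _ _ => abs_nonneg _
  have hQb : ∀ t : K, 0 ≤ t → t ≤ 1 → |Q.eval t| ≤ M := by
    intro t ht ht1
    rw [Polynomial.eval_eq_sum_range]
    calc |∑ i ∈ Finset.range (Q.natDegree + 1), Q.coeff i * t ^ i|
        ≤ ∑ i ∈ Finset.range (Q.natDegree + 1), |Q.coeff i * t ^ i| :=
          Finset.abs_sum_le_sum_abs _ _
      _ ≤ M := by
          rw [hMdef]
          refine Finset.sum_le_sum fun i _ => ?_
          rw [abs_mul]
          have h1 : |t ^ i| ≤ 1 := by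
            rw [abs_pow, abs_of_nonneg ht]
            exact pow_le_one₀ ht ht1
          calc |Q.coeff i| * |t ^ i| ≤ |Q.coeff i| * 1 :=
                mul_le_mul_of_nonneg_left h1 (abs_nonneg _)
            _ = |Q.coeff i| := mul_one _
  refine ⟨min 1 (P.eval 0 / (2 * (M + 1))), lt_min one_pos (by positivity), ?_⟩
  intro t ht htδ
  have ht1 : t ≤ 1 := le_trans htδ (min_le_left _ _)
  have ht2 : t ≤ P.eval 0 / (2 * (M + 1)) := le_trans htδ (min_le_right _ _)
  have hq := hQb t ht ht1
  have habs : |t * Q.eval t| ≤ t * (M + 1) := by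
    rw [abs_mul, abs_of_nonneg ht]
    exact mul_le_mul_of_nonneg_left (by linarith) ht
  have ht3 : t * (M + 1) ≤ P.eval 0 / 2 := by
    have := mul_le_mul_of_nonneg_right ht2 (by linarith : (0:K) ≤ M + 1)
    calc t * (M+1) ≤ P.eval 0 / (2 * (M + 1)) * (M + 1) := this
      _ = P.eval 0 / 2 := by field_simp
  have := abs_le.mp habs
  rw [key t]
  nlinarith [this.1, h0]

lemma aux_polys_pos_near_zero {K : Type*} [Field K] [LinearOrder K] [IsStrictOrderedRing K] {ι : Type*}
    (s : Finset ι) (P : ι → Polynomial K) (h0 : ∀ i ∈ s, 0 < (P i).eval 0) :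
    ∃ δ : K, 0 < δ ∧ ∀ t : K, 0 ≤ t → t ≤ δ → ∀ i ∈ s, 0 < (P i).eval t := by
  classical
  induction s using Finset.induction_on with
  | empty => exact ⟨1, one_pos, by simp⟩
  | insert a s hnotmem ih =>
    obtain ⟨δ₂, hδ₂, h₂⟩ := ih fun i hi => h0 i (Finset.mem_insert_of_mem hi)
    obtain ⟨δ₁, hδ₁, h₁⟩ := aux_poly_pos_near_zero (P a) (h0 a (Finset.mem_insert_self a s))
    refine ⟨min δ₁ δ₂, lt_min hδ₁ hδ₂, fun t ht htδ i hi => ?_⟩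
    rcases Finset.mem_insert.mp hi with rfl | hi
    · exact h₁ t ht (le_trans htδ (min_le_left _ _))
    · exact h₂ t ht (le_trans htδ (min_le_right _ _)) i hi

lemma aux_line_eval {K : Type*} [CommSemiring K] {n : ℕ} (b e : Fin n → K)
    (q : MvPolynomial (Fin n) K) (t : K) :
    Polynomial.eval t (MvPolynomial.eval₂ Polynomial.C
      (fun i => Polynomial.C (b i) + Polynomial.C (e i) * Polynomial.X) q) =
    eval (fun i => b i + e i * t) q := by
  have h := MvPolynomial.eval₂_comp_left (Polynomial.evalRingHom t) Polynomial.C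
    (fun i => Polynomial.C (b i) + Polynomial.C (e i) * Polynomial.X) q
  simp only [Polynomial.coe_evalRingHom] at h
  rw [h]
  have h1 : (Polynomial.evalRingHom t).comp Polynomial.C = RingHom.id K := by
    ext x; simp
  rw [h1]
  have h2 : (Polynomial.eval t) ∘ (fun i => Polynomial.C (b i) + Polynomial.C (e i) * Polynomial.X)
      = fun i => b i + e i * t := by
    funext i; simp
  rw [h2]
  rfl

lemma aux_exists_point {K : Type*} [Field K] [LinearOrder K] [IsStrictOrderedRing K] {n m : ℕ}
    (p : Fin m → MvPolynomial (Fin n) K) {b : Fin n → K} (hb : ∀ i, 0 < eval b (p i))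
    {D : MvPolynomial (Fin n) K} (hD : D ≠ 0) :
    ∃ b' : Fin n → K, (∀ i, 0 < eval b' (p i)) ∧ eval b' D ≠ 0 := by
  have hc : ∃ c : Fin n → K, eval c D ≠ 0 := by
    by_contra h
    push_neg at h
    exact hD (MvPolynomial.funext (q := 0) (by simp [h]))
  obtain ⟨c, hc⟩ := hc
  set φ : MvPolynomial (Fin n) K → Polynomial K := fun q =>
    MvPolynomial.eval₂ Polynomial.C
      (fun i => Polynomial.C (b i) + Polynomial.C (c i - b i) * Polynomial.X) q with hφ
  have keyφ : ∀ q t, Polynomial.eval t (φ q) = eval (fun i => b i + (c i - b i) * t) q :=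
    fun q t => aux_line_eval b (fun i => c i - b i) q t
  have hφD : φ D ≠ 0 := by
    intro h
    apply hc
    have := keyφ D 1
    rw [h] at this
    simpa using this.symm
  obtain ⟨δ, hδ, hδp⟩ := aux_polys_pos_near_zero Finset.univ (fun i => φ (p i))
    (fun i _ => by rw [keyφ]; simpa using hb i)
  have hinf : (Set.Ioo (0:K) δ \ {x | (φ D).IsRoot x}).Infinite :=
    (Set.Ioo_infinite hδ).diff (Polynomial.finite_setOf_isRoot hφD)
  obtain ⟨t, ht⟩ := hinf.nonempty
  obtain ⟨⟨ht0, htδ⟩, htroot⟩ := ht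
  refine ⟨fun i => b i + (c i - b i) * t, fun i => ?_, ?_⟩
  · rw [← keyφ]
    exact hδp t ht0.le htδ.le i (Finset.mem_univ i)
  · rw [← keyφ]
    exact htroot

section AuxCone
set_option synthInstance.maxHeartbeats 1000000
set_option maxHeartbeats 1600000
variable {K : Type u} [Field K] [LinearOrder K] [IsStrictOrderedRing K] {n m : ℕ}

lemma aux_cone_repr (p : Fin m → MvPolynomial (Fin n) K)
    (f : RatFuncField K n)
    (hf : InCone (Set.range fun i =>
      algebraMap (MvPolynomial (Fin n) K) (RatFuncField K n) (p i)) f) :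
    ∃ N D : MvPolynomial (Fin n) K, D ≠ 0 ∧
      f = algebraMap (MvPolynomial (Fin n) K) (RatFuncField K n) N /
        (algebraMap (MvPolynomial (Fin n) K) (RatFuncField K n) D) ^ 2 ∧
      ∀ b ∈ SetSP p, 0 ≤ eval b N := by
  have hinj : Function.Injective (algebraMap (MvPolynomial (Fin n) K) (RatFuncField K n)) :=
    IsFractionRing.injective _ _
  have hne : ∀ D : MvPolynomial (Fin n) K, D ≠ 0 →
      algebraMap (MvPolynomial (Fin n) K) (RatFuncField K n) D ≠ 0 := fun D hD h0 =>
    hD (hinj (by rw [h0, map_zero]))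
  induction hf with
  | mem x hx =>
    obtain ⟨i, rfl⟩ := hx
    exact ⟨p i, 1, one_ne_zero, by rw [map_one, one_pow, div_one], fun b hb => (hb i).le⟩
  | sq x hx =>
    obtain ⟨a, d, hd, rfl⟩ := IsFractionRing.div_surjective (A := MvPolynomial (Fin n) K) x
    have hd0 : d ≠ 0 := nonZeroDivisors.ne_zero hd
    refine ⟨a * a, d, hd0, ?_, fun b _ => by simp [mul_self_nonneg]⟩
    rw [map_mul, div_mul_div_comm, sq]
  | add x y hx hy ihx ihy =>
    obtain ⟨N₁, D₁, hD₁, he₁, hp₁⟩ := ihx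
    obtain ⟨N₂, D₂, hD₂, he₂, hp₂⟩ := ihy
    refine ⟨N₁ * D₂ ^ 2 + N₂ * D₁ ^ 2, D₁ * D₂, mul_ne_zero hD₁ hD₂, ?_, ?_⟩
    · have h1 := hne D₁ hD₁
      have h2 := hne D₂ hD₂
      rw [he₁, he₂]
      simp only [map_add, map_mul, map_pow]
      rw [div_add_div _ _ (pow_ne_zero 2 h1) (pow_ne_zero 2 h2), mul_pow]
      ring
    · intro b hb
      have := hp₁ b hb
      have := hp₂ b hb
      simp only [map_add, map_mul, map_pow]
      positivity
  | mul x y hx hy ihx ihy =>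
    obtain ⟨N₁, D₁, hD₁, he₁, hp₁⟩ := ihx
    obtain ⟨N₂, D₂, hD₂, he₂, hp₂⟩ := ihy
    refine ⟨N₁ * N₂, D₁ * D₂, mul_ne_zero hD₁ hD₂, ?_, ?_⟩
    · have h1 := hne D₁ hD₁
      have h2 := hne D₂ hD₂
      rw [he₁, he₂]
      simp only [map_mul, map_pow]
      rw [div_mul_div_comm, ← mul_pow]
    · intro b hb
      have := hp₁ b hb
      have := hp₂ b hb
      simp only [map_mul]
      positivity

lemma aux_neg_one_not_inCone (p : Fin m → MvPolynomial (Fin n) K)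
    (hS : (SetSP p).Nonempty) :
    ¬ InCone (Set.range fun i =>
      algebraMap (MvPolynomial (Fin n) K) (RatFuncField K n) (p i)) (-1) := by
  intro h
  obtain ⟨N, D, hD, heq, hpos⟩ := aux_cone_repr p _ h
  have hinj : Function.Injective (algebraMap (MvPolynomial (Fin n) K) (RatFuncField K n)) :=
    IsFractionRing.injective _ _
  have hιD : algebraMap (MvPolynomial (Fin n) K) (RatFuncField K n) D ≠ 0 :=
    (map_ne_zero_iff _ hinj).mpr hD
  have hND : N = -(D * D) := by
    apply hinj
    have h1 : algebraMap (MvPolynomial (Fin n) K) (RatFuncField K n) N =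
        -(algebraMap (MvPolynomial (Fin n) K) (RatFuncField K n) D) ^ 2 := by
      rw [eq_comm, div_eq_iff (pow_ne_zero 2 hιD)] at heq
      linear_combination heq
    rw [h1]
    simp only [map_neg, map_mul]
    ring
  obtain ⟨b, hb⟩ := hS
  obtain ⟨b', hb', hDb'⟩ := aux_exists_point p hb hD
  have h2 := hpos b' hb'
  rw [hND] at h2
  simp only [map_neg, map_mul] at h2
  nlinarith [mul_self_pos.mpr hDb']

end AuxCone

inductive PreCone {F : Type*} [Field F] (C : Set F) : F → Prop
  | mem : ∀ x ∈ C, PreCone C x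
  | sq : ∀ x : F, PreCone C (x * x)
  | add : ∀ x y : F, PreCone C x → PreCone C y → PreCone C (x + y)
  | mul : ∀ x y : F, PreCone C x → PreCone C y → PreCone C (x * y)

def IsPreordering {F : Type*} [Field F] (P : Set F) : Prop :=
  (∀ x : F, x * x ∈ P) ∧ (∀ x ∈ P, ∀ y ∈ P, x + y ∈ P) ∧
    (∀ x ∈ P, ∀ y ∈ P, x * y ∈ P) ∧ (-1 : F) ∉ P

lemma aux_exists_fieldOrdering {F : Type*} [Field F] (C : Set F)
    (hC : ¬ PreCone C (-1)) : ∃ O : FieldOrdering F, ∀ x ∈ C, x ∈ O.P := by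
  classical
  set S : Set (Set F) := {P | IsPreordering P} with hS
  have hbase : {x | PreCone C x} ∈ S :=
    ⟨fun x => PreCone.sq x, fun x hx y hy => PreCone.add x y hx hy,
      fun x hx y hy => PreCone.mul x y hx hy, hC⟩
  have hchainC : ∀ c ⊆ S, IsChain (· ⊆ ·) c → c.Nonempty →
      ∃ ub ∈ S, ∀ s ∈ c, s ⊆ ub := by
    intro c hcS hchain hcne
    refine ⟨⋃₀ c, ⟨?_, ?_, ?_, ?_⟩, fun s hs => Set.subset_sUnion_of_mem hs⟩
    · intro x
      obtain ⟨P, hP⟩ := hcne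
      exact Set.mem_sUnion_of_mem ((hcS hP).1 x) hP
    · rintro x ⟨P, hP, hxP⟩ y ⟨Q, hQ, hyQ⟩
      rcases hchain.total hP hQ with h | h
      · exact Set.mem_sUnion_of_mem ((hcS hQ).2.1 x (h hxP) y hyQ) hQ
      · exact Set.mem_sUnion_of_mem ((hcS hP).2.1 x hxP y (h hyQ)) hP
    · rintro x ⟨P, hP, hxP⟩ y ⟨Q, hQ, hyQ⟩
      rcases hchain.total hP hQ with h | h
      · exact Set.mem_sUnion_of_mem ((hcS hQ).2.2.1 x (h hxP) y hyQ) hQ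
      · exact Set.mem_sUnion_of_mem ((hcS hP).2.2.1 x hxP y (h hyQ)) hP
    · rintro ⟨P, hP, hxP⟩
      exact (hcS hP).2.2.2 hxP
  obtain ⟨M, hbaseM, hMmax⟩ := zorn_subset_nonempty S hchainC _ hbase
  obtain ⟨hMpre, hMub⟩ := hMmax
  obtain ⟨hMsq, hMadd, hMmul, hMneg⟩ := hMpre
  have h0M : (0 : F) ∈ M := by simpa using hMsq 0
  have h1M : (1 : F) ∈ M := by simpa using hMsq 1
  have htotal : ∀ a : F, a ∈ M ∨ -a ∈ M := by
    intro a
    set M' : Set F := {z | ∃ p ∈ M, ∃ q ∈ M, z = p + q * a} with hM'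
    have hsub : M ⊆ M' := fun z hz => ⟨z, hz, 0, h0M, by ring⟩
    by_cases hneg : (-1 : F) ∈ M'
    · right
      obtain ⟨p, hp, q, hq, hpq⟩ := hneg
      by_cases hq0 : q = 0
      · exact absurd (by rw [hpq, hq0]; simpa using hp) hMneg
      · have h1p : (1 : F) + p ∈ M := hMadd 1 h1M p hp
        have hmem : ((1 : F) + p) * q * (q⁻¹ * q⁻¹) ∈ M :=
          hMmul _ (hMmul _ h1p q hq) _ (hMsq q⁻¹)
        have heq : -a = ((1 : F) + p) * q * (q⁻¹ * q⁻¹) := by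
          have hqi : q * q⁻¹ = 1 := mul_inv_cancel₀ hq0
          linear_combination (q * q⁻¹ * q⁻¹) * hpq + (a * (q * q⁻¹ + 1)) * hqi
        rwa [heq]
    · left
      have hM'pre : M' ∈ S := by
        refine ⟨fun x => hsub (hMsq x), ?_, ?_, hneg⟩
        · rintro x ⟨p, hp, q, hq, rfl⟩ y ⟨p', hp', q', hq', rfl⟩
          exact ⟨p + p', hMadd p hp p' hp', q + q', hMadd q hq q' hq', by ring⟩
        · rintro x ⟨p, hp, q, hq, rfl⟩ y ⟨p', hp', q', hq', rfl⟩
          refine ⟨p * p' + q * q' * (a * a), ?_, p * q' + p' * q, ?_, by ring⟩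
          · exact hMadd _ (hMmul p hp p' hp') _
              (hMmul _ (hMmul q hq q' hq') _ (hMsq a))
          · exact hMadd _ (hMmul p hp q' hq') _ (hMmul p' hp' q hq)
      have : M' ⊆ M := hMub hM'pre hsub
      exact this ⟨0, h0M, 1, h1M, by ring⟩
  refine ⟨⟨M, hMadd, hMmul, hMsq, hMneg, htotal⟩, fun x hx => hbaseM (PreCone.mem x hx)⟩

set_option synthInstance.maxHeartbeats 2000000
set_option maxHeartbeats 8000000

/-- If `ν̃` extends `ν` with `A_p̄ ⊆ O_ν̃`, then the residue field
carries an ordering in which every `res(q/c²)` (for `q` in the multiplicative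
semigroup generated by the `p_i` and `ν̃ q = ν̃ (c²)`) is nonnegative. -/
theorem exists_residue_ordering {K : Type u} [Field K] [LinearOrder K] [IsStrictOrderedRing K] {Γ₀ : Type v}
    [LinearOrderedCommGroupWithZero Γ₀] (ν : Valuation K Γ₀) (hK : IsRCVF ν)
    {n m : ℕ} (p : Fin m → MvPolynomial (Fin n) K) (hS : (SetSP p).Nonempty)
    {Γ : Type w} [LinearOrderedCommGroupWithZero Γ]
    (wt : Valuation (RatFuncField K n) Γ) (hext : ValExtends ν wt)
    (hA : ∀ x ∈ OAlgebraGen ν (SetIP p), wt x ≤ 1) :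
    ∃ Oℓ : FieldOrdering (IsLocalRing.ResidueField wt.valuationSubring),
      ∀ x : IsLocalRing.ResidueField wt.valuationSubring,
        (∃ q c : RatFuncField K n,
          q ∈ Subsemigroup.closure
            (Set.range fun i =>
              algebraMap (MvPolynomial (Fin n) K) (RatFuncField K n) (p i)) ∧
          wt q = wt (c * c) ∧
          ∃ u : wt.valuationSubring, (u : RatFuncField K n) = q / (c * c) ∧
            IsLocalRing.residue wt.valuationSubring u = x) →
        x ∈ Oℓ.P := by
  classical
  set Sr : Set (RatFuncField K n) := Set.range fun i =>
      algebraMap (MvPolynomial (Fin n) K) (RatFuncField K n) (p i) with hSr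
  set C : Set (IsLocalRing.ResidueField wt.valuationSubring) :=
    {x | ∃ q c : RatFuncField K n, q ∈ Subsemigroup.closure Sr ∧ wt q = wt (c * c) ∧
      ∃ u : wt.valuationSubring, (u : RatFuncField K n) = q / (c * c) ∧
        IsLocalRing.residue wt.valuationSubring u = x} with hC
  suffices h : ¬ PreCone C (-1) by
    obtain ⟨Oℓ, hOℓ⟩ := aux_exists_fieldOrdering C h
    exact ⟨Oℓ, fun x hx => hOℓ x hx⟩
  intro hcone
  have lift : ∀ x, PreCone C x → ∃ u : wt.valuationSubring,
      IsLocalRing.residue wt.valuationSubring u = x ∧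
        ((u : RatFuncField K n) = 0 ∨ InCone Sr (u : RatFuncField K n)) := by
    intro x hx
    induction hx with
    | mem x hx =>
      obtain ⟨q, c, hq, hwt, u, hu, hres⟩ := hx
      refine ⟨u, hres, ?_⟩
      by_cases hq0 : q = 0
      · left; rw [hu, hq0, zero_div]
      · right
        have hc : c ≠ 0 := by
          intro h0
          rw [h0, mul_zero, map_zero] at hwt
          exact hq0 ((Valuation.zero_iff wt).mp hwt)
        have hqc : InCone Sr q :=
          Subsemigroup.closure_induction (fun y hy => InCone.mem y hy)
            (fun y z _ _ hy hz => InCone.mul y z hy hz) hq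
        have hrw : q / (c * c) = q * (c⁻¹ * c⁻¹) := by
          rw [div_eq_mul_inv, mul_inv]
        rw [hu, hrw]
        exact InCone.mul _ _ hqc (InCone.sq _ (inv_ne_zero hc))
    | sq x =>
      obtain ⟨u, hu⟩ := IsLocalRing.residue_surjective x
      refine ⟨u * u, by rw [map_mul, hu], ?_⟩
      by_cases h0 : (u : RatFuncField K n) = 0
      · left; push_cast; rw [h0, mul_zero]
      · right; push_cast; exact InCone.sq _ h0
    | add x y hx hy ihx ihy =>
      obtain ⟨u, hu, hu'⟩ := ihx
      obtain ⟨v, hv, hv'⟩ := ihy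
      refine ⟨u + v, by rw [map_add, hu, hv], ?_⟩
      push_cast
      rcases hu' with h0 | hIn
      · rcases hv' with h0' | hIn'
        · left; rw [h0, h0', add_zero]
        · right; rw [h0, zero_add]; exact hIn'
      · rcases hv' with h0' | hIn'
        · right; rw [h0', add_zero]; exact hIn
        · right; exact InCone.add _ _ hIn hIn'
    | mul x y hx hy ihx ihy =>
      obtain ⟨u, hu, hu'⟩ := ihx
      obtain ⟨v, hv, hv'⟩ := ihy
      refine ⟨u * v, by rw [map_mul, hu, hv], ?_⟩
      push_cast
      rcases hu' with h0 | hIn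
      · left; rw [h0, zero_mul]
      · rcases hv' with h0' | hIn'
        · left; rw [h0', mul_zero]
        · right; exact InCone.mul _ _ hIn hIn'
  obtain ⟨u, hres, hor⟩ := lift (-1) hcone
  have hu0 : (u : RatFuncField K n) ≠ 0 := by
    intro h0
    have hz : u = 0 := Subtype.ext h0
    rw [hz, map_zero] at hres
    exact (by norm_num : ((0 : IsLocalRing.ResidueField wt.valuationSubring) ≠ -1)) hres
  have hIn : InCone Sr (u : RatFuncField K n) := hor.resolve_left hu0
  have hneg1 : (u : RatFuncField K n) ≠ -1 := by
    intro h
    exact aux_neg_one_not_inCone p hS (by rw [← h]; exact hIn)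
  have h1u : (1 : RatFuncField K n) + u ≠ 0 := by
    intro h
    apply hneg1
    linear_combination h
  have hresz : IsLocalRing.residue wt.valuationSubring (1 + u) = 0 := by
    rw [map_add, map_one, hres]; ring
  have hmem : (1 + u) ∈ IsLocalRing.maximalIdeal wt.valuationSubring :=
    Ideal.Quotient.eq_zero_iff_mem.mp hresz
  have hnunit : ¬ IsUnit ((1 : wt.valuationSubring) + u) :=
    IsLocalRing.mem_maximalIdeal _ |>.mp hmem
  have hint : Valuation.Integers wt (wt.valuationSubring) :=
    ⟨Subtype.coe_injective, fun r => r.2, fun r hr => ⟨⟨r, hr⟩, rfl⟩⟩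
  have hcoe : ((1 + u : wt.valuationSubring) : RatFuncField K n)
      = 1 + (u : RatFuncField K n) := by push_cast; ring
  have hle : wt ((1 : RatFuncField K n) + u) ≤ 1 := by
    rw [← hcoe]; exact (1 + u : wt.valuationSubring).2
  have hne1 : wt ((1 : RatFuncField K n) + u) ≠ 1 := by
    intro h
    apply hnunit
    apply hint.isUnit_iff_valuation_eq_one.mpr
    rw [show (algebraMap wt.valuationSubring (RatFuncField K n)) (1 + u)
      = ((1 + u : wt.valuationSubring) : RatFuncField K n) from rfl, hcoe]
    exact h
  have hlt : wt ((1 : RatFuncField K n) + u) < 1 := lt_of_le_of_ne hle hne1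
  have hIP : ((1 : RatFuncField K n) + u)⁻¹ ∈ SetIP p := ⟨u, hIn, rfl⟩
  have hinv : wt (((1 : RatFuncField K n) + u)⁻¹) ≤ 1 :=
    hA _ (Subring.subset_closure (Or.inr hIP))
  rw [map_inv₀] at hinv
  have hne0 : wt ((1 : RatFuncField K n) + u) ≠ 0 := by
    rw [Valuation.ne_zero_iff]; exact h1u
  have hge : (1 : Γ) ≤ wt ((1 : RatFuncField K n) + u) := by
    have h2 := mul_le_mul_right hinv (wt ((1 : RatFuncField K n) + u))
    rwa [mul_inv_cancel₀ hne0, mul_one] at h2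
  exact absurd hlt (not_lt.mpr hge)
end

section
/- (Baer–Krull, special case) Let (L,μ) be a valued field with residue field ℓ, let ≤_ℓ be a linear order making ℓ an ordered field, and let s be a semi-section of (L,μ). Then the relation defined on nonzero x ∈ L by x >_L 0 ⟺ res(x/s(μ(x))) >_ℓ 0 is the positivity relation of a linear order ≤_L making L an ordered field; moreover ≤_L induces ≤_ℓ on the residue field; and finally, any linear order on L making L an ordered field which induces ≤_ℓ on ℓ is compatible with μ. -/
universe u v w

open MvPolynomial

section BaerKrullAux

variable {L : Type u} [Field L]

lemma FieldOrdering.not_both (O : FieldOrdering L) {a : L} (ha : a ≠ 0)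
    (h1 : a ∈ O.P) (h2 : -a ∈ O.P) : False := by
  have h3 := O.mul_mem _ (O.mul_mem _ h1 _ h2) _ (O.square_mem a⁻¹)
  have he : a * -a * (a⁻¹ * a⁻¹) = -1 := by
    field_simp
  exact O.neg_one_not_mem (he ▸ h3)

lemma FieldOrdering.pos_add_s6 (O : FieldOrdering L) {a b : L} (ha : O.Pos a) (hb : O.Pos b) :
    O.Pos (a + b) := by
  refine ⟨O.add_mem _ ha.1 _ hb.1, fun h => ?_⟩
  have hb' : -b = a := neg_eq_of_add_eq_zero_left h
  exact O.not_both hb.2 hb.1 (by rw [hb']; exact ha.1)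

lemma FieldOrdering.pos_mul_s6 (O : FieldOrdering L) {a b : L} (ha : O.Pos a) (hb : O.Pos b) :
    O.Pos (a * b) :=
  ⟨O.mul_mem _ ha.1 _ hb.1, mul_ne_zero ha.2 hb.2⟩

lemma FieldOrdering.pos_sq_s6 (O : FieldOrdering L) {a : L} (ha : a ≠ 0) : O.Pos (a * a) :=
  ⟨O.square_mem a, mul_ne_zero ha ha⟩

lemma FieldOrdering.pos_inv (O : FieldOrdering L) {a : L} (ha : O.Pos a) : O.Pos a⁻¹ := by
  refine ⟨?_, inv_ne_zero ha.2⟩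
  have : a * (a⁻¹ * a⁻¹) = a⁻¹ := by
    field_simp
  rw [← this]
  exact O.mul_mem _ ha.1 _ (O.square_mem a⁻¹)

lemma bk_residue_zero_iff {Γ : Type v} [LinearOrderedCommGroupWithZero Γ]
    (μ : Valuation L Γ) (u : μ.valuationSubring) :
    IsLocalRing.residue μ.valuationSubring u = 0 ↔ μ (u : L) < 1 := by
  rw [IsLocalRing.residue_eq_zero_iff, ValuationSubring.valuation_lt_one_iff]
  exact ((Valuation.isEquiv_valuation_valuationSubring μ).lt_one_iff_lt_one).symm

lemma bk_sq_eq_one {Γ : Type v} [LinearOrderedCommGroupWithZero Γ] {a : Γ}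
    (h : a * a = 1) : a = 1 := by
  rcases lt_trichotomy a 1 with hl | he | hg
  · have : a * a ≤ a * 1 := mul_le_mul_right hl.le a
    rw [mul_one] at this
    exact absurd h (this.trans_lt hl).ne
  · exact he
  · have : a * 1 ≤ a * a := mul_le_mul_right hg.le a
    rw [mul_one, h] at this
    exact absurd hg (not_lt.2 this)

end BaerKrullAux

set_option maxHeartbeats 1000000 in
/-- **Baer–Krull, special case.** Given an ordering of the residue field and a
semi-section `s`, the relation `x >_L 0 ↔ res (x / s (μ x)) >_ℓ 0` (for nonzero `x`) is the
positivity relation of a field ordering of `L`; this ordering induces the given ordering of the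
residue field; and any field ordering of `L` inducing the given residue ordering is compatible
with `μ`. -/
theorem baer_krull {L : Type u} [Field L] {Γ : Type v} [LinearOrderedCommGroupWithZero Γ]
    (μ : Valuation L Γ) (hsurj : ∀ γ : Γ, γ ≠ 0 → ∃ x : L, μ x = γ)
    (Oℓ : FieldOrdering (IsLocalRing.ResidueField μ.valuationSubring))
    (s : Γ → L) (hs : IsSemiSection μ s) :
    (∃ OL : FieldOrdering L,
      (∀ x : L, x ≠ 0 → (OL.Pos x ↔ ResPos μ Oℓ (x / s (μ x)))) ∧
      OrderingInduces μ OL Oℓ) ∧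
    ∀ OL : FieldOrdering L, OrderingInduces μ OL Oℓ → OL.IsCompatible μ := by
    classical
  have hmu_ne : ∀ {x : L}, x ≠ 0 → μ x ≠ 0 := fun {x} hx => μ.ne_zero_iff.2 hx
  have hsne : ∀ {γ : Γ}, γ ≠ 0 → s γ ≠ 0 := by
    intro γ hγ h0
    apply hγ
    rw [← hs.1 γ hγ, h0, map_zero]
  have hval1 : ∀ {x : L}, x ≠ 0 → μ (x / s (μ x)) = 1 := by
    intro x hx
    rw [map_div₀, hs.1 _ (hmu_ne hx), div_self (hmu_ne hx)]
  -- facts about `s 1`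
  obtain ⟨c₀, hc₀ne, hc₀⟩ := hs.2 1 1 one_ne_zero one_ne_zero
  rw [one_mul] at hc₀
  have hs1ne : s 1 ≠ 0 := hsne one_ne_zero
  have hs1c : s 1 * (c₀ * c₀) = 1 := by
    have h2 : s 1 * (s 1 * (c₀ * c₀)) = s 1 * 1 := by
      rw [mul_one, ← mul_assoc]; exact hc₀.symm
    exact mul_left_cancel₀ hs1ne h2
  have hs1inv : (s 1)⁻¹ = c₀ * c₀ := inv_eq_of_mul_eq_one_right hs1c
  have hμc₀ : μ c₀ = 1 := by
    have h1 : μ (s 1) * (μ c₀ * μ c₀) = 1 := by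
      rw [← map_mul, ← map_mul, hs1c, map_one]
    rw [hs.1 1 one_ne_zero, one_mul] at h1
    exact bk_sq_eq_one h1
  -- the factor `c` in the semi-section identity is always a unit
  have hμc : ∀ {γ₁ γ₂ : Γ}, γ₁ ≠ 0 → γ₂ ≠ 0 → ∀ {c : L},
      s (γ₁ * γ₂) = s γ₁ * s γ₂ * (c * c) → μ c = 1 := by
    intro γ₁ γ₂ h₁ h₂ c hc
    have h12 : γ₁ * γ₂ ≠ 0 := mul_ne_zero h₁ h₂
    have h := congrArg μ hc
    rw [hs.1 _ h12, map_mul, map_mul, map_mul, hs.1 _ h₁, hs.1 _ h₂] at h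
    have hcc : μ c * μ c = 1 := by
      apply mul_left_cancel₀ h12
      rw [mul_one]
      exact h.symm
    exact bk_sq_eq_one hcc
  set res := IsLocalRing.residue μ.valuationSubring with hresdef
  set Q : L → Prop := fun x => ResPos μ Oℓ (x / s (μ x)) with hQdef
  have qne : ∀ x : L, Q x → x ≠ 0 := by
    rintro x ⟨u, hu, hpos⟩ rfl
    apply hpos.2
    have hu0 : u = 0 := Subtype.ext (by rw [hu]; simp)
    rw [hu0, map_zero]
  -- multiplicativity
  have qmul : ∀ x y : L, x ≠ 0 → y ≠ 0 → Q x → Q y → Q (x * y) := by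
    rintro x y hx hy ⟨u, hu, hupos⟩ ⟨v, hv, hvpos⟩
    obtain ⟨c, hcne, hc⟩ := hs.2 (μ x) (μ y) (hmu_ne hx) (hmu_ne hy)
    have hμc' : μ c = 1 := hμc (hmu_ne hx) (hmu_ne hy) hc
    have hci : μ (c⁻¹ : L) ≤ 1 := by rw [map_inv₀, hμc', inv_one]
    set ci : μ.valuationSubring := ⟨c⁻¹, hci⟩ with hcidef
    have hcires : res ci ≠ 0 := by
      rw [Ne, bk_residue_zero_iff]
      simp [hcidef, map_inv₀, hμc']
    refine ⟨u * v * (ci * ci), ?_, ?_⟩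
    · push_cast
      rw [hu, hv, map_mul μ, hc]
      have hsx := hsne (hmu_ne hx)
      have hsy := hsne (hmu_ne hy)
      have hcic : (ci : L) = c⁻¹ := rfl
      rw [hcic]
      field_simp
      try ring
    · rw [map_mul, map_mul]
      exact Oℓ.pos_mul_s6 (Oℓ.pos_mul_s6 hupos hvpos) (Oℓ.pos_sq_s6 hcires)
  -- squares
  have qsq : ∀ x : L, x ≠ 0 → Q (x * x) := by
    intro x hx
    obtain ⟨c, hcne, hc⟩ := hs.2 (μ x) (μ x) (hmu_ne hx) (hmu_ne hx)
    have hμc' : μ c = 1 := hμc (hmu_ne hx) (hmu_ne hx) hc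
    have h1 : μ (x / (s (μ x) * c)) = 1 := by
      rw [map_div₀, map_mul, hs.1 _ (hmu_ne hx), hμc', mul_one, div_self (hmu_ne hx)]
    set w : μ.valuationSubring := ⟨x / (s (μ x) * c), h1.le⟩ with hwdef
    have hwres : res w ≠ 0 := by
      rw [Ne, bk_residue_zero_iff]
      simp [hwdef, h1]
    refine ⟨w * w, ?_, ?_⟩
    · push_cast
      rw [map_mul μ, hc]
      have hsx := hsne (hmu_ne hx)
      have hwc : (w : L) = x / (s (μ x) * c) := rfl
      rw [hwc]
      field_simp
      try ring
    · rw [map_mul]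
      exact Oℓ.pos_sq_s6 hwres
  -- addition with strictly smaller valuation
  have qadd_lt : ∀ x y : L, x ≠ 0 → y ≠ 0 → Q y → μ x < μ y → Q (x + y) := by
    rintro x y hx hy ⟨v, hv, hvpos⟩ hlt
    have hμxy : μ (x + y) = μ y := μ.map_add_eq_of_lt_right hlt
    have hw : μ (x / s (μ y)) < 1 := by
      rw [map_div₀, hs.1 _ (hmu_ne hy)]
      rw [div_lt_iff₀ (zero_lt_iff.2 (hmu_ne hy)), one_mul]
      exact hlt
    set w : μ.valuationSubring := ⟨x / s (μ y), hw.le⟩ with hwdef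
    refine ⟨v + w, ?_, ?_⟩
    · have hcw : ((v + w : μ.valuationSubring) : L) = ↑v + ↑w := by push_cast; ring
      rw [hcw, hv, hμxy]
      show y / s (μ y) + x / s (μ y) = (x + y) / s (μ y)
      rw [← add_div, add_comm]
    · rw [map_add]
      have h0 : res w = 0 := (bk_residue_zero_iff μ w).2 hw
      rw [h0, add_zero]
      exact hvpos
  -- addition with equal valuation
  have qadd_eq : ∀ x y : L, x ≠ 0 → y ≠ 0 → x + y ≠ 0 → Q x → Q y → μ x = μ y →
      Q (x + y) := by
    rintro x y hx hy hxy ⟨u, hu, hupos⟩ ⟨v, hv, hvpos⟩ heq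
    have hpos : Oℓ.Pos (res (u + v)) := by
      rw [map_add]
      exact Oℓ.pos_add_s6 hupos hvpos
    have hcoe : ((u + v : μ.valuationSubring) : L) = (x + y) / s (μ y) := by
      push_cast
      rw [hu, hv, heq, ← add_div]
    have h1 : μ ((u + v : μ.valuationSubring) : L) = 1 := by
      refine le_antisymm (u + v).2 (not_lt.1 fun h => hpos.2 ?_)
      exact (bk_residue_zero_iff μ (u + v)).2 h
    rw [hcoe] at h1
    have hμxy : μ (x + y) = μ y := by
      rw [map_div₀, hs.1 _ (hmu_ne hy)] at h1
      exact (div_eq_one_iff_eq (hmu_ne hy)).1 h1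
    exact ⟨u + v, by rw [hcoe, hμxy], hpos⟩
  set P : Set L := {x | x = 0 ∨ Q x} with hPdef
  have hadd : ∀ x ∈ P, ∀ y ∈ P, x + y ∈ P := by
    intro x hx y hy
    rcases hx with rfl | hqx
    · simpa using hy
    rcases hy with rfl | hqy
    · rw [add_zero]; exact Or.inr hqx
    by_cases hxy : x + y = 0
    · exact Or.inl hxy
    have hx0 := qne x hqx
    have hy0 := qne y hqy
    rcases lt_trichotomy (μ x) (μ y) with h | h | h
    · exact Or.inr (qadd_lt x y hx0 hy0 hqy h)
    · exact Or.inr (qadd_eq x y hx0 hy0 hxy hqx hqy h)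
    · rw [add_comm]
      exact Or.inr (qadd_lt y x hy0 hx0 hqx h)
  have hmul : ∀ x ∈ P, ∀ y ∈ P, x * y ∈ P := by
    intro x hx y hy
    rcases hx with rfl | hqx
    · left; simp
    rcases hy with rfl | hqy
    · left; simp
    exact Or.inr (qmul x y (qne x hqx) (qne y hqy) hqx hqy)
  have hsq : ∀ x : L, x * x ∈ P := by
    intro x
    by_cases hx : x = 0
    · left; simp [hx]
    · exact Or.inr (qsq x hx)
  have hneg1 : (-1 : L) ∉ P := by
    rintro (h | ⟨u, hu, hpos⟩)
    · simpa using h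
    · have hμ : μ (-1 : L) = 1 := by rw [Valuation.map_neg, map_one]
      rw [hμ] at hu
      have hu' : (u : L) = -(c₀ * c₀) := by
        rw [hu, div_eq_mul_inv, hs1inv]
        ring
      have hc' : μ c₀ ≤ 1 := hμc₀.le
      set c' : μ.valuationSubring := ⟨c₀, hc'⟩ with hc'def
      have hueq : u = -(c' * c') := Subtype.ext (by push_cast; exact hu')
      have hcres : res c' ≠ 0 := by
        rw [Ne, bk_residue_zero_iff]
        simp [hc'def, hμc₀]
      have hres' : res u = -(res c' * res c') := by
        rw [hueq, map_neg, map_mul]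
      apply Oℓ.not_both (a := res c' * res c') (mul_ne_zero hcres hcres)
        (Oℓ.square_mem _)
      rw [← hres']
      exact hpos.1
  have htot : ∀ x : L, x ∈ P ∨ -x ∈ P := by
    intro x
    by_cases hx : x = 0
    · exact Or.inl (Or.inl hx)
    set w : μ.valuationSubring := ⟨x / s (μ x), (hval1 hx).le⟩ with hwdef
    have hwne : res w ≠ 0 := by
      rw [Ne, bk_residue_zero_iff]
      simp [hwdef, hval1 hx]
    rcases Oℓ.total (res w) with h | h
    · exact Or.inl (Or.inr ⟨w, rfl, h, hwne⟩)
    · refine Or.inr (Or.inr ⟨-w, ?_, ?_⟩)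
      · have hcw : ((-w : μ.valuationSubring) : L) = -(x / s (μ x)) := by push_cast; ring
        rw [hcw, Valuation.map_neg, neg_div]
      · rw [map_neg]
        exact ⟨h, neg_ne_zero.2 hwne⟩
  set OL : FieldOrdering L :=
    ⟨P, hadd, hmul, hsq, hneg1, htot⟩ with hOLdef
  have hOLpos : ∀ x : L, x ≠ 0 → (OL.Pos x ↔ Q x) := by
    intro x hx
    constructor
    · rintro ⟨h | h, _⟩
      · exact absurd h hx
      · exact h
    · exact fun h => ⟨Or.inr h, hx⟩
  constructor
  · refine ⟨OL, fun x hx => hOLpos x hx, ?_⟩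
    -- OL induces Oℓ
    intro u hμu hupos
    have hx : (u : L) ≠ 0 := hupos.2
    have hq : Q (u : L) := (hOLpos _ hx).1 hupos
    obtain ⟨w, hw, hwpos⟩ := hq
    rw [hμu] at hw
    have hw' : (w : L) = (u : L) * (c₀ * c₀) := by
      rw [hw, div_eq_mul_inv, hs1inv]
    have hci : μ (c₀⁻¹ : L) ≤ 1 := by rw [map_inv₀, hμc₀, inv_one]
    set ci : μ.valuationSubring := ⟨c₀⁻¹, hci⟩ with hcidef
    have hcires : res ci ≠ 0 := by
      rw [Ne, bk_residue_zero_iff]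
      simp [hcidef, map_inv₀, hμc₀]
    have hueq : u = w * (ci * ci) := by
      refine Subtype.ext ?_
      push_cast
      rw [hw']
      have hcic : (ci : L) = c₀⁻¹ := rfl
      rw [hcic]
      field_simp
    rw [hueq, map_mul, map_mul]
    exact Oℓ.pos_mul_s6 hwpos (Oℓ.pos_sq_s6 hcires)
  · -- any ordering inducing Oℓ is compatible
    intro OL' hind x y hx hxy
    by_contra hlt
    push_neg at hlt
    have hx0 : x ≠ 0 := hx.2
    have hy : OL'.Pos y := by
      have h := OL'.pos_add_s6 hx hxy
      have he : x + (y - x) = y := by ring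
      rwa [he] at h
    have ht : OL'.Pos (y / x) := by
      rw [div_eq_mul_inv]
      exact OL'.pos_mul_s6 hy (OL'.pos_inv hx)
    have htm : OL'.Pos (y / x - 1) := by
      have he : y / x - 1 = (y - x) * x⁻¹ := by
        field_simp
      rw [he]
      exact OL'.pos_mul_s6 hxy (OL'.pos_inv hx)
    have hμt : μ (y / x) < 1 := by
      rw [map_div₀, div_lt_iff₀ (zero_lt_iff.2 (hmu_ne hx0)), one_mul]
      exact hlt
    have hμtm : μ (y / x - 1) = 1 := by
      rw [sub_eq_add_neg, μ.map_add_eq_of_lt_right (by rwa [Valuation.map_neg, map_one]),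
        Valuation.map_neg, map_one]
    have hkey := hind ⟨y / x - 1, hμtm.le⟩ hμtm htm
    have hw0 : IsLocalRing.residue μ.valuationSubring ⟨y / x - 1, hμtm.le⟩ = -1 := by
      have heq : (⟨y / x - 1, hμtm.le⟩ : μ.valuationSubring)
          = ⟨y / x, hμt.le⟩ - 1 := Subtype.ext (by push_cast; ring)
      rw [heq, map_sub, map_one, (bk_residue_zero_iff μ _).2 hμt, zero_sub]
    rw [hw0] at hkey
    exact Oℓ.neg_one_not_mem hkey.1
end

section
/- Let (L,μ) be a valued field with value group Γ_L, and let p₁,…,p_t ∈ L× with γ_i = μ(p_i) such that the images of γ₁,…,γ_t in Γ_L/2Γ_L are linearly independent over ℤ/2ℤ. Then there exists a semi-section s of (L,μ) such that s(γ_i)/p_i is a square in L× for every 1 ≤ i ≤ t. -/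
universe u v w

open MvPolynomial

noncomputable section SemiSectionAux

variable {G H : Type*} [CommGroup G] [CommGroup H]

/-- Subgroup of squares. -/
def sqSubgroup (G : Type*) [CommGroup G] : Subgroup G := (powMonoidHom 2 : G →* G).range

/-- The square-class group, additively. -/
abbrev SqCl (G : Type*) [CommGroup G] : Type _ := Additive (G ⧸ sqSubgroup G)

def mkSq (g : G) : SqCl G := Additive.ofMul (QuotientGroup.mk g : G ⧸ sqSubgroup G)

lemma mkSq_surjective : Function.Surjective (mkSq (G := G)) := by
  intro x
  obtain ⟨g, hg⟩ := QuotientGroup.mk_surjective (Additive.toMul x)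
  exact ⟨g, by simp [mkSq, hg]⟩

lemma mkSq_mul (a b : G) : mkSq (a * b) = mkSq a + mkSq b := rfl

lemma mkSq_one : mkSq (1 : G) = 0 := by simp [mkSq]

lemma mkSq_eq_zero_iff (a : G) : mkSq a = 0 ↔ ∃ c : G, a = c * c := by
  constructor
  · intro h
    have : (QuotientGroup.mk a : G ⧸ sqSubgroup G) = 1 := h
    rw [QuotientGroup.eq_one_iff] at this
    obtain ⟨c, hc⟩ := this
    exact ⟨c, by rw [← hc]; simp [powMonoidHom, pow_two]⟩
  · rintro ⟨c, rfl⟩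
    show Additive.ofMul (QuotientGroup.mk (c * c) : G ⧸ sqSubgroup G) = 0
    have : (QuotientGroup.mk (c * c) : G ⧸ sqSubgroup G) = 1 := by
      rw [QuotientGroup.eq_one_iff]
      exact ⟨c, by simp [powMonoidHom, pow_two]⟩
    rw [this]; rfl

lemma mkSq_eq_iff (a b : G) : mkSq a = mkSq b ↔ ∃ c : G, b = a * (c * c) := by
  constructor
  · intro h
    have h2 : (QuotientGroup.mk a : G ⧸ sqSubgroup G) = QuotientGroup.mk b :=
      Additive.ofMul.injective h
    rw [QuotientGroup.eq] at h2
    obtain ⟨c, hc⟩ := h2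
    refine ⟨c, ?_⟩
    have : a⁻¹ * b = c * c := by rw [← hc]; simp [powMonoidHom, pow_two]
    rw [← this]; group
  · rintro ⟨c, rfl⟩
    show mkSq a = mkSq (a * (c * c))
    rw [mkSq_mul, (mkSq_eq_zero_iff (c * c)).2 ⟨c, rfl⟩, add_zero]

instance sqClModule : Module (ZMod 2) (SqCl G) :=
  AddCommGroup.zmodModule (by
    intro x
    obtain ⟨g, rfl⟩ := mkSq_surjective x
    have : mkSq g + mkSq g = 0 := by
      rw [← mkSq_mul]
      exact (mkSq_eq_zero_iff _).2 ⟨g, rfl⟩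
    simpa [two_nsmul] using this)

lemma sqSubgroup_le_comap (φ : G →* H) : sqSubgroup G ≤ (sqSubgroup H).comap φ := by
  rintro g ⟨x, rfl⟩
  exact ⟨φ x, by simp [powMonoidHom]⟩

/-- Induced linear map on square-class groups. -/
def sqMap (φ : G →* H) : SqCl G →ₗ[ZMod 2] SqCl H :=
  AddMonoidHom.toZModLinearMap 2
    (MonoidHom.toAdditive (QuotientGroup.map _ _ φ (sqSubgroup_le_comap φ)))

lemma sqMap_mkSq (φ : G →* H) (g : G) : sqMap φ (mkSq g) = mkSq (φ g) := rfl

lemma mkSq_prod {ι : Type*} (S : Finset ι) (a : ι → G) :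
    mkSq (∏ i ∈ S, a i) = ∑ i ∈ S, mkSq (a i) := by
  classical
  induction S using Finset.induction_on with
  | empty => simpa using mkSq_one
  | insert _ _ h ih => rw [Finset.prod_insert h, Finset.sum_insert h, mkSq_mul, ih]

end SemiSectionAux

lemma zmodTwo0 : ∀ x : ZMod 2, x ≠ 1 → x = 0 := by decide
lemma zmodTwo1 : ∀ x : ZMod 2, x ≠ 0 → x = 1 := by decide


/-- If `p₁,…,p_t ∈ L×` have values independent modulo `2Γ_L`, there is a
semi-section `s` of `(L,μ)` with `s (μ (p i)) / p i` a square for every `i`. -/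
theorem exists_semisection {L : Type u} [Field L] {Γ : Type v}
    [LinearOrderedCommGroupWithZero Γ] (μ : Valuation L Γ)
    (hsurj : ∀ γ : Γ, γ ≠ 0 → ∃ x : L, μ x = γ)
    {t : ℕ} (p : Fin t → L) (hp : ∀ i, p i ≠ 0)
    (hindep : ∀ S : Finset (Fin t), (∃ δ : Γ, (∏ i ∈ S, μ (p i)) = δ * δ) → S = ∅) :
    ∃ s : Γ → L, IsSemiSection μ s ∧
      ∀ i, ∃ c : L, c ≠ 0 ∧ s (μ (p i)) = p i * (c * c) := by
  classical
  haveI : Fact (Nat.Prime 2) := ⟨Nat.prime_two⟩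
  set μu : Lˣ →* Γˣ := Units.map μ.toMonoidWithZeroHom.toMonoidHom with hμu
  have hμu_coe : ∀ x : Lˣ, ((μu x : Γ)) = μ (x : L) := fun x => rfl
  have hγ : ∀ i, μ (p i) ≠ 0 := fun i => (Valuation.ne_zero_iff μ).2 (hp i)
  set pu : Fin t → Lˣ := fun i => Units.mk0 (p i) (hp i) with hpu
  set gu : Fin t → Γˣ := fun i => Units.mk0 (μ (p i)) (hγ i) with hgu
  have hμupu : ∀ i, μu (pu i) = gu i := fun i => Units.ext (by simp [hμu_coe, hpu, hgu])
  set f : SqCl Lˣ →ₗ[ZMod 2] SqCl Γˣ := sqMap μu with hf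
  set w : Fin t → SqCl Γˣ := fun i => mkSq (gu i) with hw_def
  set v : Fin t → SqCl Lˣ := fun i => mkSq (pu i) with hv_def
  have hfv : ∀ i, f (v i) = w i := by
    intro i; rw [hv_def, hf, sqMap_mkSq, hμupu]
  have fsurj : ∀ y : SqCl Γˣ, ∃ z, f z = y := by
    intro y
    obtain ⟨u, rfl⟩ := mkSq_surjective y
    obtain ⟨x, hx⟩ := hsurj (u : Γ) u.ne_zero
    have hx0 : x ≠ 0 := by
      intro h; rw [h, map_zero] at hx; exact u.ne_zero hx.symm
    refine ⟨mkSq (Units.mk0 x hx0), ?_⟩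
    rw [hf, sqMap_mkSq]
    congr 1
    exact Units.ext (by simp [hμu_coe, hx])
  have htwo0 : ∀ x : ZMod 2, x ≠ 1 → x = 0 := zmodTwo0
  have htwo1 : ∀ x : ZMod 2, x ≠ 0 → x = 1 := zmodTwo1
  have hw : LinearIndependent (ZMod 2) w := by
    rw [Fintype.linearIndependent_iff]
    intro g hg i
    set S := Finset.univ.filter (fun j => g j = 1) with hS
    have hsum : ∑ j, g j • w j = ∑ j ∈ S, w j := by
      rw [hS, Finset.sum_filter]
      apply Finset.sum_congr rfl
      intro j _
      by_cases h1 : g j = 1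
      · rw [if_pos h1, h1, one_smul]
      · rw [if_neg h1, htwo0 _ h1, zero_smul]
    have h0 : mkSq (∏ j ∈ S, gu j) = 0 := by
      rw [mkSq_prod, ← hsum]; exact hg
    obtain ⟨c, hc⟩ := (mkSq_eq_zero_iff _).1 h0
    have hSe : S = ∅ := by
      apply hindep S
      refine ⟨(c : Γ), ?_⟩
      calc ∏ j ∈ S, μ (p j) = ((∏ j ∈ S, gu j : Γˣ) : Γ) :=
            (map_prod (Units.coeHom Γ) gu S).symm
        _ = ((c * c : Γˣ) : Γ) := by rw [hc]
        _ = (c : Γ) * (c : Γ) := rfl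
    by_contra hne
    have : i ∈ S := Finset.mem_filter.2 ⟨Finset.mem_univ i, htwo1 _ hne⟩
    rw [hSe] at this
    exact absurd this (Finset.notMem_empty i)
  have hwr := (linearIndepOn_id_range_iff hw.injective).mpr hw
  set E := hwr.extend (Set.subset_univ _) with hE
  set B : Module.Basis E (ZMod 2) (SqCl Γˣ) := Module.Basis.extend hwr with hB
  have hsub : Set.range w ⊆ E := hwr.subset_extend _
  set gfun : E → SqCl Lˣ := fun x =>
    if h : ∃ i, w i = (x : SqCl Γˣ) then v h.choose else (fsurj (x : SqCl Γˣ)).choose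
    with hgfun
  set σ : SqCl Γˣ →ₗ[ZMod 2] SqCl Lˣ := B.constr ℕ gfun with hσ
  have hσw : ∀ i, σ (w i) = v i := by
    intro i
    have hx : w i ∈ E := hsub (Set.mem_range_self i)
    have hBx : B ⟨w i, hx⟩ = w i := Module.Basis.extend_apply_self hwr ⟨w i, hx⟩
    have h1 : σ (B ⟨w i, hx⟩) = gfun ⟨w i, hx⟩ := by
      rw [hσ, Module.Basis.constr_basis]
    rw [hBx] at h1
    rw [h1, hgfun]
    beta_reduce
    have hex : ∃ j, w j = ((⟨w i, hx⟩ : E) : SqCl Γˣ) := ⟨i, rfl⟩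
    rw [dif_pos hex]
    have hji : hex.choose = i := hw.injective hex.choose_spec
    rw [hji]
  have hfσ : ∀ y, f (σ y) = y := by
    have hcomp : f.comp σ = LinearMap.id := by
      apply B.ext
      intro x
      rw [LinearMap.comp_apply, LinearMap.id_apply, hσ, Module.Basis.constr_basis, hB,
        Module.Basis.extend_apply_self]
      rw [hgfun]
      beta_reduce
      by_cases h : ∃ i, w i = (x : SqCl Γˣ)
      · rw [dif_pos h, hfv, h.choose_spec]
      · rw [dif_neg h]; exact (fsurj _).choose_spec
    intro y
    exact DFunLike.congr_fun hcomp y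
  have hkey : ∀ γ : Γ, ∀ h : γ ≠ 0, ∃ x : Lˣ, μ (x : L) = γ ∧
      mkSq x = σ (mkSq (Units.mk0 γ h)) := by
    intro γ h
    obtain ⟨x₀, hx₀⟩ := mkSq_surjective (σ (mkSq (Units.mk0 γ h)))
    have h1 : mkSq (μu x₀) = mkSq (Units.mk0 γ h) := by
      rw [← sqMap_mkSq, ← hf, hx₀]; exact hfσ _
    obtain ⟨d, hd⟩ := (mkSq_eq_iff _ _).1 h1
    obtain ⟨e, he⟩ := hsurj (d : Γ) d.ne_zero
    have he0 : e ≠ 0 := by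
      intro hh; rw [hh, map_zero] at he; exact d.ne_zero he.symm
    refine ⟨x₀ * (Units.mk0 e he0 * Units.mk0 e he0), ?_, ?_⟩
    · have hγeq : γ = μ (x₀ : L) * ((d : Γ) * (d : Γ)) := by
        have := congrArg (fun (z : Γˣ) => (z : Γ)) hd
        simpa [hμu_coe] using this
      have : ((x₀ * (Units.mk0 e he0 * Units.mk0 e he0) : Lˣ) : L) = (x₀ : L) * (e * e) := by
        simp
      rw [this, map_mul, map_mul, he, ← hγeq]
    · rw [mkSq_mul, (mkSq_eq_zero_iff _).2 ⟨Units.mk0 e he0, rfl⟩, add_zero, hx₀]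
  set s : Γ → L := fun γ => if h : γ = 0 then 1 else ((hkey γ h).choose : L) with hs
  have hval : ∀ γ : Γ, ∀ h : γ ≠ 0, μ (s γ) = γ := by
    intro γ h
    rw [hs]; simp only [dif_neg h]
    exact ((hkey γ h).choose_spec).1
  have hcl : ∀ γ : Γ, ∀ h : γ ≠ 0, mkSq (hkey γ h).choose = σ (mkSq (Units.mk0 γ h)) :=
    fun γ h => ((hkey γ h).choose_spec).2
  refine ⟨s, ⟨fun γ h => hval γ h, ?_⟩, ?_⟩
  · intro γ₁ γ₂ h1 h2
    have h12 : γ₁ * γ₂ ≠ 0 := mul_ne_zero h1 h2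
    have e1 : mkSq ((hkey γ₁ h1).choose * (hkey γ₂ h2).choose)
        = mkSq ((hkey (γ₁ * γ₂) h12).choose) := by
      rw [mkSq_mul, hcl γ₁ h1, hcl γ₂ h2, hcl (γ₁ * γ₂) h12, ← map_add]
      congr 1
      rw [← mkSq_mul]
      congr 1
      exact Units.ext (by simp)
    obtain ⟨c, hc⟩ := (mkSq_eq_iff _ _).1 e1
    refine ⟨(c : L), c.ne_zero, ?_⟩
    have hcoe := congrArg (fun (z : Lˣ) => (z : L)) hc
    simp only [Units.val_mul] at hcoe
    rw [hs]
    simp only [dif_neg h12, dif_neg h1, dif_neg h2]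
    exact hcoe
  · intro i
    have hi : μ (p i) ≠ 0 := hγ i
    have e2 : mkSq (pu i) = mkSq ((hkey (μ (p i)) hi).choose) := by
      rw [hcl (μ (p i)) hi]
      exact (hσw i).symm
    obtain ⟨c, hc⟩ := (mkSq_eq_iff _ _).1 e2
    refine ⟨(c : L), c.ne_zero, ?_⟩
    have hcoe := congrArg (fun (z : Lˣ) => (z : L)) hc
    simp only [Units.val_mul] at hcoe
    rw [hs]
    simp only [dif_neg hi]
    rw [hcoe]
    simp [hpu]
end
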